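/- arXiv:2311.07208 — 6 statements merged into one kernel-verified Lean document; each statement's English description precedes it below -/
import Mathlib

section
/- Let X be a Polish space with a bounded compatible complete metric d. For any n ∈ ℕ and points x_0,...,x_{n-1}, y_0,...,y_{n-1} ∈ X, the minimum over permutations σ of {0,...,n-1} of (1/n)·Σ_{i=0}^{n-1} d(x_i, y_{σ(i)}) equals the Kantorovich–Rubinshtein distance γ((1/n)Σδ_{x_i}, (1/n)Σδ_{y_i}), where γ(μ,ν) = sup{|∫f dμ − ∫f dν| : f bounded with Lipschitz constant ≤ 1}. -/
open MeasureTheory Filter Topology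
open scoped ENNReal NNReal

section Defs

variable {X : Type*} [MetricSpace X] [MeasurableSpace X] [BorelSpace X]

/-- Kantorovich–Rubinshtein (dual-Lipschitz) distance between two measures:
the supremum of `|∫ f dμ - ∫ f dν|` over bounded `f` with Lipschitz constant at most `1`. -/
noncomputable def krDist (μ ν : Measure X) : ℝ :=
  sSup { r : ℝ | ∃ f : X → ℝ, LipschitzWith 1 f ∧ (∃ C, ∀ x, |f x| ≤ C) ∧
    r = |∫ x, f x ∂μ - ∫ x, f x ∂ν| }

/-- Empirical measure of the first `n` terms of a sequence (as a plain measure). -/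
noncomputable def empMeas (x : ℕ → X) (n : ℕ) : Measure X :=
  (n : ℝ≥0∞)⁻¹ • ∑ i ∈ Finset.range n, Measure.dirac (x i)

/-- Average of the Dirac measures at the first `max n 1` points of a sequence, as a
probability measure.  For `n ≥ 1` this is the `n`-th empirical measure. -/
noncomputable def avgDirac (x : ℕ → X) (n : ℕ) : ProbabilityMeasure X :=
  ⟨((max n 1 : ℕ) : ℝ≥0∞)⁻¹ • ∑ i ∈ Finset.range (max n 1), Measure.dirac (x i), by
    constructor
    have h : (∑ i ∈ Finset.range (max n 1), Measure.dirac (x i)) Set.univ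
        = ((max n 1 : ℕ) : ℝ≥0∞) := by
      simp [Measure.finset_sum_apply]
    rw [Measure.smul_apply, h, smul_eq_mul]
    exact ENNReal.inv_mul_cancel (by simp) (by simp)⟩

/-- The set of weak* limit points of the empirical measures of a sequence. -/
def limitMeasures (x : ℕ → X) : Set (ProbabilityMeasure X) :=
  { μ | ∃ φ : ℕ → ℕ, StrictMono φ ∧ Tendsto (fun k => avgDirac x (φ k)) atTop (𝓝 μ) }

/-- `x` is a generic point for `μ`: the empirical measures along the orbit of `x`
converge to `μ` in the weak* topology. -/
def genericFor (T : X → X) (x : X) (μ : ProbabilityMeasure X) : Prop :=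
  Tendsto (fun n => avgDirac (fun i => T^[i] x) n) atTop (𝓝 μ)

/-- The invariant measure supported on the periodic orbit of `x` of period `p`. -/
noncomputable def periodicOrbitMeasure (T : X → X) (x : X) (p : ℕ) : ProbabilityMeasure X :=
  avgDirac (fun i => T^[i] x) p

/-- The set of invariant measures supported on periodic orbits of points of `K`. -/
def perMeasures (T : X → X) (K : Set X) : Set (ProbabilityMeasure X) :=
  { μ | ∃ x ∈ K, ∃ p, 0 < p ∧ T^[p] x = x ∧ μ = periodicOrbitMeasure T x p }

/-- The mean orbital pseudo-metric `Ē`. -/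
noncomputable def meanOrbitalDist (T : X → X) (x y : X) : ℝ :=
  limsup (fun n => ⨅ σ : Equiv.Perm (Fin n),
    (∑ i : Fin n, dist (T^[(i : ℕ)] x) (T^[((σ i : Fin n) : ℕ)] y)) / n) atTop

/-- `x` is an asymptotic average pseudo-orbit for `T`. -/
def IsAAPO (T : X → X) (x : ℕ → X) : Prop :=
  Tendsto (fun n => (∑ i ∈ Finset.range n, dist (T (x i)) (x (i + 1))) / n) atTop (𝓝 0)

/-- The point `x` is `K`-closable. -/
def ClosableAt (T : X → X) (K : Set X) (x : X) : Prop :=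
  ∀ ε > (0 : ℝ), ∀ N : ℕ, ∃ p q : ℕ, 0 < p ∧ N ≤ p ∧ p ≤ q ∧ (q : ℝ) ≤ (1 + ε) * p ∧
    ∃ y ∈ K, T^[q] y = y ∧ ∀ i < p, dist (T^[i] y) (T^[i] x) < ε

/-- The set `K ⊆ Per(T)` is linkable. -/
def Linkable (T : X → X) (K : Set X) : Prop :=
  ∀ y₁ ∈ K, ∀ y₂ ∈ K, ∀ ε > (0 : ℝ), ∀ lam ∈ Set.Icc (0 : ℝ) 1,
    ∃ p₁ p₂ q₁ q₂ : ℕ, 0 < p₁ ∧ 0 < p₂ ∧ T^[p₁] y₁ = y₁ ∧ T^[p₂] y₂ = y₂ ∧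
      ∃ z ∈ K, T^[q₂] z = z ∧
        lam - ε ≤ (p₁ : ℝ) / (p₁ + p₂) ∧ (p₁ : ℝ) / (p₁ + p₂) ≤ lam + ε ∧
        p₁ ≤ q₁ ∧ (q₁ : ℝ) ≤ (1 + ε) * p₁ ∧ (∀ i < p₁, dist (T^[i] z) (T^[i] y₁) < ε) ∧
        p₂ ≤ q₂ - q₁ ∧ ((q₂ - q₁ : ℕ) : ℝ) ≤ (1 + ε) * p₂ ∧
        (∀ i < p₂, dist (T^[i + q₁] z) (T^[i] y₂) < ε)

/-- `(X,T)` has the asymptotic orbital average shadowing property. -/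
def AOASP (T : X → X) : Prop :=
  ∀ x : ℕ → X, IsAAPO T x → ∃ z : X,
    Tendsto (fun n => ⨅ σ : Equiv.Perm (Fin n),
      (∑ i : Fin n, dist (x (i : ℕ)) (T^[((σ i : Fin n) : ℕ)] z)) / n) atTop (𝓝 0)

end Defs

namespace KRPot

variable {n : ℕ} (w : Fin n → Fin n → ℝ)

/-- Weight of a walk: `walkW w l k` is the weight of the walk ending at `k`
whose earlier vertices, from latest to earliest, are given by `l`. -/
def walkW : List (Fin n) → Fin n → ℝ
  | [], _ => 0
  | j :: l, k => w k j + walkW l j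

@[simp] lemma walkW_nil (k : Fin n) : walkW w [] k = 0 := rfl
@[simp] lemma walkW_cons (j : Fin n) (l : List (Fin n)) (k : Fin n) :
    walkW w (j :: l) k = w k j + walkW w l j := rfl

lemma walkW_split (s t : List (Fin n)) (j k : Fin n) :
    walkW w (s ++ j :: t) k = walkW w (s ++ [j]) k + walkW w t j := by
  induction s generalizing k with
  | nil => simp [add_assoc]
  | cons a s ih => simp [ih, add_assoc]

lemma walkW_zip : ∀ (t : List (Fin n)) (k : Fin n),
    walkW w t k = (List.zipWith w (k :: t) t).sum
  | [], k => rfl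
  | j :: l, k => by
    rw [walkW_cons, walkW_zip l j]
    simp

lemma zipWith_append_left {α β γ : Type*} (f : α → β → γ) :
    ∀ (a b : List α) (c : List β), c.length ≤ a.length →
      List.zipWith f (a ++ b) c = List.zipWith f a c
  | _, _, [], _ => by simp
  | [], b, x :: c, h => by simp at h
  | y :: a, b, x :: c, h => by
    simp only [List.cons_append, List.zipWith_cons_cons]
    rw [zipWith_append_left f a b c (by simpa using h)]

lemma exists_dup_split {α : Type*} : ∀ (l : List α), ¬ l.Nodup →
    ∃ (a : α) (s t u : List α), l = s ++ a :: (t ++ a :: u) := by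
  intro l
  induction l with
  | nil => simp
  | cons b l ih =>
    intro h
    rw [List.nodup_cons] at h
    push_neg at h
    by_cases hb : b ∈ l
    · obtain ⟨t, u, rfl⟩ := List.append_of_mem hb
      exact ⟨b, [], t, u, by simp⟩
    · obtain ⟨a, s, t, u, rfl⟩ := ih (h hb)
      exact ⟨a, b :: s, t, u, by simp⟩

lemma getElem_idx_congr {α : Type*} (l : List α) {i j : ℕ} (h : i = j) (hi : i < l.length) :
    l[i]'hi = l[j]'(h ▸ hi) := by subst h; rfl

lemma map_formPerm_eq_rotate (L : List (Fin n)) (hnd : L.Nodup) :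
    L.map (fun k => L.formPerm k) = L.rotate 1 := by
  apply List.ext_getElem
  · simp
  · intro i h1 h2
    rw [List.getElem_map, List.formPerm_apply_getElem L hnd i (by simpa using h1),
      List.getElem_rotate]

lemma cycle_nonneg (hdiag : ∀ k, w k k = 0)
    (hperm : ∀ c : Equiv.Perm (Fin n), 0 ≤ ∑ k, w k (c k))
    (l : List (Fin n)) (v : Fin n) (hnd : (v :: l).Nodup) :
    0 ≤ walkW w (l ++ [v]) v := by
  have h1 : walkW w (l ++ [v]) v
      = ((v :: l).map (fun k => w k ((v :: l).formPerm k))).sum := by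
    rw [walkW_zip]
    have e0 : v :: (l ++ [v]) = (v :: l) ++ [v] := by simp
    rw [e0, zipWith_append_left w (v :: l) [v] (l ++ [v]) (by simp)]
    have e1 : ∀ (g : Fin n → Fin n) (L : List (Fin n)),
        L.map (fun k => w k (g k)) = List.zipWith w L (L.map g) := by
      intro g L
      induction L with
      | nil => rfl
      | cons a L ih => simp only [List.map_cons, List.zipWith_cons_cons, ih]
    rw [e1 (fun k => (v :: l).formPerm k) (v :: l), map_formPerm_eq_rotate _ hnd, List.rotate_cons_succ, List.rotate_zero]
  have h2 : ∑ k ∈ (v :: l).toFinset, w k ((v :: l).formPerm k)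
      = ((v :: l).map fun k => w k ((v :: l).formPerm k)).sum :=
    List.sum_toFinset _ hnd
  have h3 : ∑ k : Fin n, w k ((v :: l).formPerm k)
      = ∑ k ∈ (v :: l).toFinset, w k ((v :: l).formPerm k) := by
    refine (Finset.sum_subset (Finset.subset_univ _) ?_).symm
    intro k _ hk
    rw [List.formPerm_apply_of_notMem (by simpa using hk), hdiag]
  calc (0 : ℝ) ≤ ∑ k : Fin n, w k ((v :: l).formPerm k) := hperm _
    _ = walkW w (l ++ [v]) v := by rw [h3, h2, ← h1]

lemma closed_nonneg (hdiag : ∀ k, w k k = 0)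
    (hperm : ∀ c : Equiv.Perm (Fin n), 0 ≤ ∑ k, w k (c k)) :
    ∀ (m : ℕ) (l : List (Fin n)) (v : Fin n), l.length ≤ m → 0 ≤ walkW w (l ++ [v]) v := by
  intro m
  induction m with
  | zero =>
    intro l v hl
    rw [List.length_eq_zero_iff.mp (Nat.le_zero.mp hl)]
    simp [hdiag]
  | succ m ih =>
    intro l v hl
    by_cases hnd : (v :: l).Nodup
    · exact cycle_nonneg w hdiag hperm l v hnd
    · obtain ⟨a, s, t, u, hsp⟩ := exists_dup_split _ hnd
      rcases s with _ | ⟨b, s'⟩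
      · rw [List.nil_append] at hsp
        injection hsp with h1 h2
        subst h1; subst h2
        have hlen : t.length + (u.length + 1) ≤ m + 1 := by simpa using hl
        have h1 : 0 ≤ walkW w (t ++ [v]) v := ih t v (by omega)
        have h2 : 0 ≤ walkW w (u ++ [v]) v := ih u v (by omega)
        have key : walkW w ((t ++ v :: u) ++ [v]) v
            = walkW w (t ++ [v]) v + walkW w (u ++ [v]) v := by
          rw [List.append_assoc, List.cons_append, walkW_split]
        rw [key]; linarith
      · rw [List.cons_append] at hsp
        injection hsp with h1 h2
        subst h1; subst h2
        have hlen : s'.length + (t.length + (u.length + 2)) ≤ m + 1 := by simp at hl; omega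
        have key : walkW w ((s' ++ a :: (t ++ a :: u)) ++ [v]) v
            = walkW w ((s' ++ a :: u) ++ [v]) v + walkW w (t ++ [a]) a := by
          have e1 : (s' ++ a :: (t ++ a :: u)) ++ [v] = s' ++ a :: (t ++ a :: (u ++ [v])) := by
            simp [List.append_assoc]
          have e2 : (s' ++ a :: u) ++ [v] = s' ++ a :: (u ++ [v]) := by
            simp [List.append_assoc]
          rw [e1, e2, walkW_split w s' (t ++ a :: (u ++ [v])) a v,
            walkW_split w t (u ++ [v]) a a, walkW_split w s' (u ++ [v]) a v]
          ring
        have h1 : 0 ≤ walkW w ((s' ++ a :: u) ++ [v]) v := by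
          refine ih _ _ ?_
          simp only [List.length_append, List.length_cons]
          omega
        have h2 : 0 ≤ walkW w (t ++ [a]) a := ih t a (by omega)
        rw [key]; linarith

end KRPot

namespace KRPot2
open KRPot

variable {n : ℕ} [NeZero n] (w : Fin n → Fin n → ℝ)

noncomputable def Apot : ℕ → Fin n → ℝ
  | 0, _ => 0
  | m + 1, k => Finset.univ.inf' Finset.univ_nonempty (fun j => Apot m j + w k j)

lemma Apot_attain : ∀ (m : ℕ) (k : Fin n),
    ∃ l : List (Fin n), l.length = m ∧ Apot w m k = walkW w l k
  | 0, k => ⟨[], rfl, rfl⟩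
  | m + 1, k => by
    obtain ⟨j, -, hj⟩ := Finset.exists_mem_eq_inf' (Finset.univ_nonempty (α := Fin n))
      (fun j => Apot w m j + w k j)
    obtain ⟨l, hl, he⟩ := Apot_attain m j
    refine ⟨j :: l, by simp [hl], ?_⟩
    rw [show Apot w (m + 1) k
        = Finset.univ.inf' Finset.univ_nonempty (fun j => Apot w m j + w k j) from rfl,
      hj, walkW_cons, he]
    ring

lemma Apot_le (hdiag : ∀ k, w k k = 0) :
    ∀ (m : ℕ) (l : List (Fin n)) (k : Fin n), l.length ≤ m → Apot w m k ≤ walkW w l k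
  | 0, l, k, h => by
    rw [List.length_eq_zero_iff.mp (Nat.le_zero.mp h)]
    exact le_of_eq rfl
  | m + 1, l, k, h => by
    cases l with
    | nil =>
      calc Apot w (m + 1) k ≤ Apot w m k + w k k :=
            Finset.inf'_le _ (Finset.mem_univ k)
        _ = Apot w m k := by rw [hdiag]; ring
        _ ≤ walkW w [] k := Apot_le hdiag m [] k (Nat.zero_le m)
    | cons j l' =>
      calc Apot w (m + 1) k ≤ Apot w m j + w k j := Finset.inf'_le _ (Finset.mem_univ j)
        _ ≤ walkW w l' j + w k j := by
            have := Apot_le hdiag m l' j (by simpa using h)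
            linarith
        _ = walkW w (j :: l') k := by rw [walkW_cons]; ring

lemma shorten (hdiag : ∀ k, w k k = 0)
    (hperm : ∀ c : Equiv.Perm (Fin n), 0 ≤ ∑ k, w k (c k)) :
    ∀ (fuel : ℕ) (l : List (Fin n)) (k : Fin n), l.length ≤ fuel →
      ∃ l' : List (Fin n), l'.length ≤ n ∧ walkW w l' k ≤ walkW w l k := by
  intro fuel
  induction fuel with
  | zero =>
    intro l k h
    exact ⟨l, by omega, le_refl _⟩
  | succ fuel ih =>
    intro l k h
    rcases Nat.lt_or_ge n l.length with hlong | hshort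
    · have hnd : ¬ (k :: l).Nodup := by
        intro hc
        have := hc.length_le_card
        simp only [List.length_cons, Fintype.card_fin] at this
        omega
      obtain ⟨a, s, t, u, hsp⟩ := exists_dup_split _ hnd
      rcases s with _ | ⟨b, s'⟩
      · rw [List.nil_append] at hsp
        injection hsp with h1 h2
        subst h1; subst h2
        have hlen : t.length + (u.length + 1) ≤ fuel + 1 := by simpa using h
        have hdec : walkW w u k ≤ walkW w (t ++ k :: u) k := by
          rw [walkW_split]
          have := closed_nonneg w hdiag hperm t.length t k (le_refl _)
          linarith
        obtain ⟨l', hl', hle⟩ := ih u k (by omega)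
        exact ⟨l', hl', le_trans hle hdec⟩
      · rw [List.cons_append] at hsp
        injection hsp with h1 h2
        subst h1; subst h2
        have hlen : s'.length + (t.length + (u.length + 2)) ≤ fuel + 1 := by simp at h; omega
        have hdec : walkW w (s' ++ a :: u) k ≤ walkW w (s' ++ a :: (t ++ a :: u)) k := by
          rw [walkW_split w s' (t ++ a :: u) a k, walkW_split w t u a a,
            walkW_split w s' u a k]
          have := closed_nonneg w hdiag hperm t.length t a (le_refl _)
          linarith
        obtain ⟨l', hl', hle⟩ := ih (s' ++ a :: u) k
          (by simp only [List.length_append, List.length_cons]; omega)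
        exact ⟨l', hl', le_trans hle hdec⟩
    · exact ⟨l, hshort, le_refl _⟩

lemma exists_potential (hdiag : ∀ k, w k k = 0)
    (hperm : ∀ c : Equiv.Perm (Fin n), 0 ≤ ∑ k, w k (c k)) :
    ∃ a : Fin n → ℝ, ∀ k j, a k ≤ a j + w k j := by
  refine ⟨Apot w n, fun k j => ?_⟩
  obtain ⟨l, hl, he⟩ := Apot_attain w n j
  obtain ⟨l', hl', hle⟩ := shorten w hdiag hperm (n + 1) (j :: l) k (by simp [hl])
  calc Apot w n k ≤ walkW w l' k := Apot_le w hdiag n l' k hl'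
    _ ≤ walkW w (j :: l) k := hle
    _ = w k j + walkW w l j := walkW_cons w j l k
    _ = Apot w n j + w k j := by rw [← he]; ring

end KRPot2

section MainProof

variable {X : Type*} [MetricSpace X] [MeasurableSpace X] [BorelSpace X]

lemma KRaux.integral_avg (n : ℕ) (z : Fin n → X) (f : X → ℝ)
    (hf : Continuous f) (C : ℝ) (hb : ∀ x, |f x| ≤ C) :
    ∫ a, f a ∂((n : ℝ≥0∞)⁻¹ • ∑ i : Fin n, Measure.dirac (z i))
      = (∑ i : Fin n, f (z i)) / n := by
  have hint : ∀ i ∈ Finset.univ, Integrable f (Measure.dirac (z i)) := by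
    intro i _
    refine (integrable_const C).mono' hf.aestronglyMeasurable ?_
    exact ae_of_all _ (fun x => by simpa [Real.norm_eq_abs] using hb x)
  rw [integral_smul_measure, integral_finset_sum_measure hint]
  have hd : ∀ i : Fin n, ∫ a, f a ∂(Measure.dirac (z i)) = f (z i) := by
    intro i
    exact integral_dirac' f (z i) hf.stronglyMeasurable
  simp_rw [hd]
  rw [ENNReal.toReal_inv, ENNReal.toReal_natCast, smul_eq_mul, inv_mul_eq_div]

end MainProof

theorem stmt0 {X : Type*} [MetricSpace X] [TopologicalSpace.SeparableSpace X]
    [CompleteSpace X] [MeasurableSpace X] [BorelSpace X]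
    (hd : ∃ C, ∀ a b : X, dist a b ≤ C)
    (n : ℕ) (hn : 0 < n) (x y : Fin n → X) :
    (⨅ σ : Equiv.Perm (Fin n), (∑ i : Fin n, dist (x i) (y (σ i))) / n)
      = krDist ((n : ℝ≥0∞)⁻¹ • ∑ i : Fin n, Measure.dirac (x i))
          ((n : ℝ≥0∞)⁻¹ • ∑ i : Fin n, Measure.dirac (y i)) := by
  haveI : NeZero n := ⟨hn.ne'⟩
  obtain ⟨C, hC⟩ := hd
  have hnpos : (0 : ℝ) < (n : ℝ) := by exact_mod_cast hn
  set μ : Measure X := (n : ℝ≥0∞)⁻¹ • ∑ i : Fin n, Measure.dirac (x i) with hμ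
  set ν : Measure X := (n : ℝ≥0∞)⁻¹ • ∑ i : Fin n, Measure.dirac (y i) with hν
  set S : Set ℝ := { r : ℝ | ∃ f : X → ℝ, LipschitzWith 1 f ∧ (∃ C, ∀ x, |f x| ≤ C) ∧
    r = |∫ a, f a ∂μ - ∫ a, f a ∂ν| } with hSdef
  have hkr : krDist μ ν = sSup S := rfl
  -- every element of S is at most the cost of any permutation
  have key1 : ∀ r ∈ S, ∀ σ : Equiv.Perm (Fin n),
      r ≤ (∑ i : Fin n, dist (x i) (y (σ i))) / n := by
    rintro r ⟨f, hf, ⟨B, hB⟩, rfl⟩ σ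
    rw [hμ, hν, KRaux.integral_avg n x f hf.continuous B hB,
      KRaux.integral_avg n y f hf.continuous B hB]
    have he : (∑ i : Fin n, f (x i)) / n - (∑ i : Fin n, f (y i)) / n
        = (∑ i : Fin n, f (x i) - ∑ i : Fin n, f (y i)) / n := by ring
    rw [he, abs_div, abs_of_pos hnpos]
    have hre : ∑ i : Fin n, f (y i) = ∑ i : Fin n, f (y (σ i)) :=
      (Equiv.sum_comp σ (fun i => f (y i))).symm
    have core : |∑ i : Fin n, f (x i) - ∑ i : Fin n, f (y i)|
        ≤ ∑ i : Fin n, dist (x i) (y (σ i)) := by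
      rw [hre, ← Finset.sum_sub_distrib]
      calc |∑ i : Fin n, (f (x i) - f (y (σ i)))|
          ≤ ∑ i : Fin n, |f (x i) - f (y (σ i))| := Finset.abs_sum_le_sum_abs _ _
        _ ≤ ∑ i : Fin n, dist (x i) (y (σ i)) := by
            refine Finset.sum_le_sum (fun i _ => ?_)
            have h1 := hf.dist_le_mul (x i) (y (σ i))
            rw [Real.dist_eq] at h1
            simpa using h1
    exact (div_le_div_iff_of_pos_right hnpos).mpr core
  have hbddS : BddAbove S := by
    refine ⟨(∑ i : Fin n, dist (x i) (y i)) / n, fun r hr => ?_⟩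
    simpa using key1 r hr (Equiv.refl _)
  refine le_antisymm ?_ ?_
  · -- inf ≤ krDist : construct an optimal Lipschitz function
    obtain ⟨σ₀, hσ₀⟩ := Finite.exists_min
      (fun σ : Equiv.Perm (Fin n) => ∑ i : Fin n, dist (x i) (y (σ i)))
    set w : Fin n → Fin n → ℝ :=
      fun k j => dist (x k) (y (σ₀ j)) - dist (x k) (y (σ₀ k)) with hw
    have hdiag : ∀ k, w k k = 0 := fun k => sub_self _
    have hperm : ∀ c : Equiv.Perm (Fin n), 0 ≤ ∑ k, w k (c k) := by
      intro c
      have h1 := hσ₀ (c.trans σ₀)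
      simp only [hw, Finset.sum_sub_distrib]
      have h2 : ∑ k : Fin n, dist (x k) (y (σ₀ (c k)))
          = ∑ k : Fin n, dist (x k) (y ((c.trans σ₀) k)) := rfl
      rw [sub_nonneg, h2]
      exact h1
    obtain ⟨a, ha⟩ := KRPot2.exists_potential w hdiag hperm
    set f : X → ℝ := fun z => Finset.univ.inf' Finset.univ_nonempty
        (fun j => dist z (y (σ₀ j)) + a j) with hfdef
    have hfle : ∀ z j, f z ≤ dist z (y (σ₀ j)) + a j :=
      fun z j => Finset.inf'_le _ (Finset.mem_univ j)
    have hfex : ∀ z, ∃ j, f z = dist z (y (σ₀ j)) + a j := by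
      intro z
      obtain ⟨j, -, hj⟩ := Finset.exists_mem_eq_inf' (Finset.univ_nonempty (α := Fin n))
        (fun j => dist z (y (σ₀ j)) + a j)
      exact ⟨j, hj⟩
    have hlip : LipschitzWith 1 f := by
      apply LipschitzWith.of_dist_le_mul
      intro z z'
      rw [NNReal.coe_one, one_mul, Real.dist_eq, abs_sub_le_iff]
      constructor
      · obtain ⟨j, hj⟩ := hfex z'
        have h1 := hfle z j
        have h2 := dist_triangle z z' (y (σ₀ j))
        rw [hj]
        linarith
      · obtain ⟨j, hj⟩ := hfex z
        have h1 := hfle z' j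
        have h2 := dist_triangle z' z (y (σ₀ j))
        rw [dist_comm z' z] at h2
        rw [hj]
        linarith
    have hbnd : ∃ B, ∀ z, |f z| ≤ B := by
      have j₀ : Fin n := Classical.arbitrary (Fin n)
      refine ⟨|C| + Finset.univ.sup' Finset.univ_nonempty (fun j => |a j|),
        fun z => abs_le.mpr ⟨?_, ?_⟩⟩
      · apply Finset.le_inf'
        intro j _
        have h1 : |a j| ≤ Finset.univ.sup' Finset.univ_nonempty (fun j => |a j|) :=
          Finset.le_sup' (fun j => |a j|) (Finset.mem_univ j)
        have h2 := neg_abs_le (a j)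
        have h3 := dist_nonneg (x := z) (y := y (σ₀ j))
        have h4 := abs_nonneg C
        linarith
      · have h1 := hfle z j₀
        have h2 : dist z (y (σ₀ j₀)) ≤ |C| := (hC _ _).trans (le_abs_self C)
        have h3 : |a j₀| ≤ Finset.univ.sup' Finset.univ_nonempty (fun j => |a j|) :=
          Finset.le_sup' (fun j => |a j|) (Finset.mem_univ j₀)
        have h4 := le_abs_self (a j₀)
        linarith
    have hfx : ∀ k, dist (x k) (y (σ₀ k)) + a k ≤ f (x k) := by
      intro k
      apply Finset.le_inf'
      intro j _
      have h1 := ha k j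
      simp only [hw] at h1
      linarith
    have hfy : ∀ k, f (y (σ₀ k)) ≤ a k := by
      intro k
      have h1 := hfle (y (σ₀ k)) k
      simpa using h1
    set r : ℝ := |∫ a, f a ∂μ - ∫ a, f a ∂ν| with hr
    have hrS : r ∈ S := ⟨f, hlip, hbnd, rfl⟩
    have hdiff : (∑ k : Fin n, dist (x k) (y (σ₀ k))) / n
        ≤ ∫ a, f a ∂μ - ∫ a, f a ∂ν := by
      obtain ⟨B, hB⟩ := hbnd
      rw [hμ, hν, KRaux.integral_avg n x f hlip.continuous B hB,
        KRaux.integral_avg n y f hlip.continuous B hB]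
      have h1 : ∑ i : Fin n, f (y i) = ∑ i : Fin n, f (y (σ₀ i)) :=
        (Equiv.sum_comp σ₀ (fun i => f (y i))).symm
      have h2 : ∑ i : Fin n, f (y (σ₀ i)) ≤ ∑ i : Fin n, a i :=
        Finset.sum_le_sum (fun i _ => hfy i)
      have h3 : ∑ i : Fin n, (dist (x i) (y (σ₀ i)) + a i) ≤ ∑ i : Fin n, f (x i) :=
        Finset.sum_le_sum (fun i _ => hfx i)
      rw [Finset.sum_add_distrib] at h3
      have h4 : ∑ i : Fin n, dist (x i) (y (σ₀ i))
          ≤ ∑ i : Fin n, f (x i) - ∑ i : Fin n, f (y i) := by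
        rw [h1]
        linarith
      have he : (∑ i : Fin n, f (x i)) / n - (∑ i : Fin n, f (y i)) / n
          = (∑ i : Fin n, f (x i) - ∑ i : Fin n, f (y i)) / n := by ring
      rw [he]
      exact (div_le_div_iff_of_pos_right hnpos).mpr h4
    have hrge : (∑ k : Fin n, dist (x k) (y (σ₀ k))) / n ≤ r :=
      hdiff.trans (le_abs_self _)
    have hbb : BddBelow (Set.range fun σ : Equiv.Perm (Fin n) =>
        (∑ i : Fin n, dist (x i) (y (σ i))) / n) := by
      refine ⟨0, ?_⟩
      rintro s ⟨σ, rfl⟩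
      have : (0:ℝ) ≤ ∑ i : Fin n, dist (x i) (y (σ i)) :=
        Finset.sum_nonneg (fun i _ => dist_nonneg)
      positivity
    calc (⨅ σ : Equiv.Perm (Fin n), (∑ i : Fin n, dist (x i) (y (σ i))) / n)
        ≤ (∑ k : Fin n, dist (x k) (y (σ₀ k))) / n := ciInf_le hbb σ₀
      _ ≤ r := hrge
      _ ≤ sSup S := le_csSup hbddS hrS
  · -- krDist ≤ inf
    rw [hkr]
    apply Real.sSup_le
    · intro r hr
      exact le_ciInf (fun σ => key1 r hr σ)
    · apply le_ciInf
      intro σ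
      have : (0:ℝ) ≤ ∑ i : Fin n, dist (x i) (y (σ i)) :=
        Finset.sum_nonneg (fun i _ => dist_nonneg)
      positivity
end

section
/- Let (X,T) be a Polish dynamical system with bounded compatible complete metric d. For all x,y ∈ X, the mean orbital pseudo-metric satisfies Ē(x,y) = limsup_{n→∞} γ(m_T(x,n), m_T(y,n)), where m_T(x,n) = (1/n)Σ_{i=0}^{n-1} δ_{T^i x} is the n-th empirical measure and γ is the Kantorovich–Rubinshtein metric. -/
open MeasureTheory Filter Topology
open scoped ENNReal NNReal

section AuxPC
variable {ι : Type*}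

noncomputable def pc (r : ι → ι → ℝ) : List ι → ℝ
  | [] => 0
  | [_] => 0
  | a :: b :: l => r a b + pc r (b :: l)

@[simp] lemma pc_nil (r : ι → ι → ℝ) : pc r ([] : List ι) = 0 := rfl
@[simp] lemma pc_single (r : ι → ι → ℝ) (a : ι) : pc r [a] = 0 := rfl
@[simp] lemma pc_cons_cons (r : ι → ι → ℝ) (a b : ι) (l : List ι) :
    pc r (a :: b :: l) = r a b + pc r (b :: l) := rfl

lemma pc_append_singleton (r : ι → ι → ℝ) (j : ι) :
    ∀ (L : List ι) (hL : L ≠ []), pc r (L ++ [j]) = pc r L + r (L.getLast hL) j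
  | [a], _ => by simp
  | a :: b :: L, _ => by
    have ih := pc_append_singleton r j (b :: L) (by simp)
    simp only [List.cons_append] at ih ⊢
    rw [pc_cons_cons, pc_cons_cons, ih, List.getLast_cons (List.cons_ne_nil b L)]
    ring

lemma pc_split (r : ι → ι → ℝ) (j : ι) :
    ∀ (L₁ L₂ : List ι), pc r (L₁ ++ j :: L₂) = pc r (L₁ ++ [j]) + pc r (j :: L₂)
  | [], L₂ => by simp
  | [a], L₂ => by simp
  | a :: b :: L₁, L₂ => by
    have ih := pc_split r j (b :: L₁) L₂
    simp only [List.cons_append] at ih ⊢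
    rw [pc_cons_cons, pc_cons_cons, ih]
    ring

lemma pc_eq_sum (r : ι → ι → ℝ) :
    ∀ (m : ℕ) (l : List ι) (hl : l.length = m + 1),
      pc r l = ∑ k : Fin m, r (l.get ⟨k, by omega⟩) (l.get ⟨k + 1, by omega⟩)
  | 0, [a], _ => by simp
  | m + 1, a :: b :: t, hl => by
    have ih := pc_eq_sum r m (b :: t) (by simpa using hl)
    rw [pc_cons_cons, ih, Fin.sum_univ_succ]
    simp

lemma formPerm_sum [Fintype ι] [DecidableEq ι] (r : ι → ι → ℝ) (h0 : ∀ i, r i i = 0)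
    (l : List ι) (hne : l ≠ []) (hnd : l.Nodup) :
    ∑ i, r i (l.formPerm i) = pc r l + r (l.getLast hne) (l.head hne) := by
  cases l with
  | nil => exact absurd rfl hne
  | cons a t =>
    set l := a :: t with hl
    set n := t.length with hn
    have hlen : l.length = n + 1 := rfl
    have h1 : ∑ i, r i (l.formPerm i) = ∑ i ∈ l.toFinset, r i (l.formPerm i) :=
      (Finset.sum_subset (Finset.subset_univ _) fun x _ hx => by
        rw [List.formPerm_apply_of_notMem (by simpa using hx), h0]).symm
    have h2 : l.toFinset = Finset.image l.get Finset.univ := by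
      ext z; simp [List.mem_iff_get]
    have h3 : ∑ i ∈ l.toFinset, r i (l.formPerm i)
        = ∑ k : Fin l.length, r (l.get k) (l.formPerm (l.get k)) := by
      rw [h2, Finset.sum_image]
      intro p _ q _ hpq
      exact List.nodup_iff_injective_get.mp hnd hpq
    have h4 : ∀ k : Fin l.length, l.formPerm (l.get k)
        = l.get ⟨(k + 1) % l.length, Nat.mod_lt _ (by omega)⟩ := by
      intro k
      have := List.formPerm_apply_getElem l hnd k k.isLt
      simpa [List.get_eq_getElem] using this
    have h5 : ∑ k : Fin l.length, r (l.get k) (l.formPerm (l.get k))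
        = ∑ k : Fin (n + 1),
            r (l.get ⟨k, by omega⟩)
              (l.get ⟨(k + 1) % (n + 1), by rw [hlen]; exact Nat.mod_lt _ (Nat.succ_pos n)⟩) :=
      Finset.sum_congr rfl fun k _ => by rw [h4 k]; rfl
    rw [h1, h3, h5, Fin.sum_univ_castSucc]
    have hlast : r (l.get ⟨(Fin.last n : Fin (n+1)), by omega⟩)
          (l.get ⟨((Fin.last n : Fin (n+1)) + 1) % (n + 1),
            by rw [hlen]; exact Nat.mod_lt _ (Nat.succ_pos n)⟩)
        = r (l.getLast hne) (l.head hne) := by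
      congr 1
      · rw [List.getLast_eq_getElem]
        simp [List.get_eq_getElem, hlen]
      · rw [List.head_eq_getElem_zero hne]
        simp [List.get_eq_getElem, Fin.last, Nat.mod_self]
    rw [hlast]
    congr 1
    rw [pc_eq_sum r n l hlen]
    refine Finset.sum_congr rfl fun k _ => ?_
    congr 1
    have : ((k : ℕ) + 1) % (n + 1) = (k : ℕ) + 1 := Nat.mod_eq_of_lt (by omega)
    simp [Fin.castSucc, this]

variable [Fintype ι] [DecidableEq ι]

lemma cycle_nonneg (r : ι → ι → ℝ) (h0 : ∀ i, r i i = 0)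
    (H : ∀ τ : Equiv.Perm ι, 0 ≤ ∑ i, r i (τ i))
    (l : List ι) (hne : l ≠ []) (hnd : l.Nodup) :
    0 ≤ pc r l + r (l.getLast hne) (l.head hne) := by
  rw [← formPerm_sum r h0 l hne hnd]
  exact H _

lemma exists_potential (r : ι → ι → ℝ) (h0 : ∀ i, r i i = 0)
    (H : ∀ τ : Equiv.Perm ι, 0 ≤ ∑ i, r i (τ i)) :
    ∃ v : ι → ℝ, ∀ i j, v j ≤ v i + r i j := by
  classical
  set P : ι → Set (List ι) := fun j => {l | ∃ h : l ≠ [], l.Nodup ∧ l.getLast h = j} with hP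
  have hPfin : ∀ j, (P j).Finite := by
    intro j
    refine (List.finite_length_le ι (Fintype.card ι)).subset ?_
    rintro l ⟨h, hnd, -⟩
    exact hnd.length_le_card
  have hPne : ∀ j, (P j).Nonempty := fun j => ⟨[j], by simp [hP]⟩
  have hmin : ∀ j, ∃ l ∈ P j, ∀ l' ∈ P j, pc r l ≤ pc r l' := fun j =>
    Set.exists_min_image (P j) (pc r) (hPfin j) (hPne j)
  choose L hL hLmin using hmin
  refine ⟨fun j => pc r (L j), fun i j => ?_⟩
  obtain ⟨hne, hnd, hlast⟩ := hL i
  by_cases hj : j ∈ L i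
  · obtain ⟨L₁, L₂, hsplit⟩ := List.append_of_mem hj
    have hsub1 : (L₁ ++ [j]).Sublist (L i) := by
      rw [hsplit]
      exact ((List.nil_sublist L₂).cons₂ j).append_left L₁
    have hsub2 : (j :: L₂).Sublist (L i) := by
      rw [hsplit]
      exact List.sublist_append_right L₁ (j :: L₂)
    have hmem1 : L₁ ++ [j] ∈ P j :=
      ⟨by simp, hsub1.nodup hnd, List.getLast_append_singleton _⟩
    have h1 : pc r (L j) ≤ pc r (L₁ ++ [j]) := hLmin j _ hmem1
    have hlast2 : (j :: L₂).getLast (by simp) = i := by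
      have e1 : (L i).getLast? = some i := by
        rw [List.getLast?_eq_getLast hne, hlast]
      rw [hsplit, List.getLast?_append_of_ne_nil L₁ (by simp),
        List.getLast?_eq_getLast (l := j :: L₂) (by simp)] at e1
      exact Option.some_injective _ e1
    have hcyc : 0 ≤ pc r (j :: L₂) + r i j := by
      have := cycle_nonneg r h0 H (j :: L₂) (by simp) (hsub2.nodup hnd)
      rwa [hlast2, List.head_cons] at this
    have hsplitpc : pc r (L i) = pc r (L₁ ++ [j]) + pc r (j :: L₂) := by
      rw [hsplit]; exact pc_split r j L₁ L₂
    linarith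
  · -- extend
    have hmem : L i ++ [j] ∈ P j := by
      refine ⟨by simp, ?_, ?_⟩
      · exact (List.nodup_append.2 ⟨hnd, List.nodup_singleton j,
          fun a ha b hb hab => hj (by rw [List.mem_singleton] at hb; subst hb; subst hab; exact ha)⟩)
      · exact List.getLast_append_singleton _
    have := hLmin j _ hmem
    rw [pc_append_singleton r j (L i) hne, hlast] at this
    exact this

end AuxPC

section AuxMeas
variable {X : Type*} [MetricSpace X] [MeasurableSpace X] [BorelSpace X]

lemma integral_empMeas (u : ℕ → X) (n : ℕ) {f : X → ℝ} (hf : Continuous f) :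
    ∫ z, f z ∂(empMeas u n) = (∑ i ∈ Finset.range n, f (u i)) / n := by
  have hint : ∀ i ∈ Finset.range n, Integrable f (Measure.dirac (u i)) := by
    intro i _
    have hae : (fun _ : X => f (u i)) =ᵐ[Measure.dirac (u i)] f := by
      rw [MeasureTheory.ae_dirac_eq]
      exact Filter.eventually_pure.2 rfl
    exact (integrable_const (f (u i))).congr hae
  rw [empMeas, integral_smul_measure, integral_finset_sum_measure hint]
  have : ∀ i ∈ Finset.range n, ∫ z, f z ∂(Measure.dirac (u i)) = f (u i) := fun i _ =>
    integral_dirac' f (u i) hf.stronglyMeasurable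
  rw [Finset.sum_congr rfl this]
  simp [ENNReal.toReal_inv, div_eq_inv_mul]

lemma key {C : ℝ} (hC : ∀ a b : X, dist a b ≤ C) (u w : ℕ → X) {n : ℕ} (hn : 0 < n) :
    (⨅ σ : Equiv.Perm (Fin n), (∑ i : Fin n, dist (u (i : ℕ)) (w ((σ i : Fin n) : ℕ))) / n)
      = krDist (empMeas u n) (empMeas w n) := by
  classical
  haveI : NeZero n := ⟨hn.ne'⟩
  set S := { r : ℝ | ∃ f : X → ℝ, LipschitzWith 1 f ∧ (∃ C, ∀ x, |f x| ≤ C) ∧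
    r = |∫ z, f z ∂(empMeas u n) - ∫ z, f z ∂(empMeas w n)| } with hS
  set F : Equiv.Perm (Fin n) → ℝ := fun σ => ∑ i : Fin n, dist (u (i : ℕ)) (w ((σ i : Fin n) : ℕ))
    with hF
  -- every element of S is at most F σ / n, for every σ
  have hub : ∀ r ∈ S, ∀ σ : Equiv.Perm (Fin n), r ≤ F σ / n := by
    rintro r ⟨f, hfl, -, rfl⟩ σ
    rw [integral_empMeas u n hfl.continuous, integral_empMeas w n hfl.continuous,
      div_sub_div_same, abs_div, abs_of_nonneg (by positivity : (0:ℝ) ≤ (n:ℝ))]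
    gcongr
    rw [← Fin.sum_univ_eq_sum_range (fun i => f (u i)) n,
      ← Fin.sum_univ_eq_sum_range (fun i => f (w i)) n,
      ← Equiv.sum_comp σ (fun i => f (w (i : ℕ))), ← Finset.sum_sub_distrib]
    refine (Finset.abs_sum_le_sum_abs _ _).trans (Finset.sum_le_sum fun i _ => ?_)
    calc |f (u (i : ℕ)) - f (w ((σ i : Fin n) : ℕ))|
        = dist (f (u (i : ℕ))) (f (w ((σ i : Fin n) : ℕ))) := (Real.dist_eq _ _).symm
      _ ≤ 1 * dist (u (i : ℕ)) (w ((σ i : Fin n) : ℕ)) := hfl.dist_le_mul _ _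
      _ = _ := one_mul _
  -- S is nonempty and bounded above
  have h0S : (0 : ℝ) ∈ S := by
    refine ⟨fun _ => 0, (LipschitzWith.const (0:ℝ)).weaken zero_le_one, ⟨0, fun z => by simp⟩, by simp⟩
  have hbdd : BddAbove S := ⟨F 1 / n, fun r hr => hub r hr 1⟩
  -- the optimal permutation
  obtain ⟨σ₀, hσ₀⟩ := Finite.exists_min F
  set b : Fin n → X := fun j => w ((σ₀ j : Fin n) : ℕ) with hb
  set c : Fin n → Fin n → ℝ := fun i j => dist (u (i : ℕ)) (b j) with hc
  have hFσ₀ : F σ₀ = ∑ j : Fin n, c j j := rfl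
  -- potential
  have Hcond : ∀ τ : Equiv.Perm (Fin n), 0 ≤ ∑ i : Fin n, (c i (τ i) - c (τ i) (τ i)) := by
    intro τ
    have e1 : ∑ i : Fin n, (c i (τ i) - c (τ i) (τ i))
        = ∑ i : Fin n, c i (τ i) - ∑ i : Fin n, c (τ i) (τ i) := Finset.sum_sub_distrib _ _
    have e2 : ∑ i : Fin n, c (τ i) (τ i) = ∑ i : Fin n, c i i := Equiv.sum_comp τ fun i => c i i
    have e3 : ∑ i : Fin n, c i (τ i) = F (σ₀ * τ) := rfl
    have := hσ₀ (σ₀ * τ)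
    rw [e1, e2, e3, ← hFσ₀]
    linarith
  obtain ⟨v, hv⟩ := exists_potential (fun i j => c i j - c j j) (fun i => sub_self _) Hcond
  set w' : Fin n → ℝ := fun j => c j j + v j with hw'
  have hne : (Finset.univ : Finset (Fin n)).Nonempty := Finset.univ_nonempty
  set f : X → ℝ := fun z => Finset.inf' Finset.univ hne (fun j => dist z (b j) - w' j) with hf2
  have hflip : LipschitzWith 1 f := by
    refine LipschitzWith.of_le_add fun z z' => ?_
    obtain ⟨j, -, hj⟩ := Finset.exists_mem_eq_inf' hne (fun j => dist z' (b j) - w' j)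
    have h1 : f z ≤ dist z (b j) - w' j := Finset.inf'_le _ (Finset.mem_univ j)
    have h2 : dist z (b j) ≤ dist z z' + dist z' (b j) := dist_triangle _ _ _
    have h3 : f z' = dist z' (b j) - w' j := hj
    linarith
  have hC0 : (0 : ℝ) ≤ C := by
    have := hC (u 0) (u 0); simpa [dist_self] using this
  have hfb : ∀ j, f (b j) ≤ - w' j := by
    intro j
    have h : f (b j) ≤ dist (b j) (b j) - w' j :=
      Finset.inf'_le (fun j' => dist (b j) (b j') - w' j') (Finset.mem_univ j)
    rw [dist_self] at h
    linarith
  have hfu : ∀ i : Fin n, - v i ≤ f (u (i : ℕ)) := by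
    intro i
    refine Finset.le_inf' hne _ fun j _ => ?_
    have h := hv i j
    have hcij : dist (u (i : ℕ)) (b j) = c i j := rfl
    have hwj : w' j = c j j + v j := rfl
    linarith
  have hfbd : ∃ C', ∀ z, |f z| ≤ C' := by
    refine ⟨C + ∑ j : Fin n, |w' j|, fun z => abs_le.2 ⟨?_, ?_⟩⟩
    · obtain ⟨j, -, hj⟩ := Finset.exists_mem_eq_inf' hne (fun j => dist z (b j) - w' j)
      have h3 : f z = dist z (b j) - w' j := hj
      have h4 : w' j ≤ |w' j| := le_abs_self _
      have h5 : |w' j| ≤ ∑ j', |w' j'| :=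
        Finset.single_le_sum (fun j' _ => abs_nonneg (w' j')) (Finset.mem_univ j)
      have h6 : (0:ℝ) ≤ dist z (b j) := dist_nonneg
      linarith
    · set j0 : Fin n := ⟨0, hn⟩
      have h1 : f z ≤ dist z (b j0) - w' j0 := Finset.inf'_le _ (Finset.mem_univ j0)
      have h4 : -w' j0 ≤ |w' j0| := neg_le_abs _
      have h5 : |w' j0| ≤ ∑ j', |w' j'| :=
        Finset.single_le_sum (fun j' _ => abs_nonneg (w' j')) (Finset.mem_univ j0)
      have h6 : dist z (b j0) ≤ C := hC _ _
      linarith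
  have hsumineq : F σ₀ ≤ ∑ i : Fin n, f (u (i : ℕ)) - ∑ j : Fin n, f (b j) := by
    have h1 : ∑ j : Fin n, f (b j) ≤ ∑ j : Fin n, -w' j :=
      Finset.sum_le_sum fun j _ => hfb j
    have h2 : ∑ i : Fin n, -v i ≤ ∑ i : Fin n, f (u (i : ℕ)) :=
      Finset.sum_le_sum fun i _ => hfu i
    have h4 : ∑ j : Fin n, (-v j) - ∑ j : Fin n, (-w' j) = ∑ j : Fin n, c j j := by
      rw [← Finset.sum_sub_distrib]
      refine Finset.sum_congr rfl fun j _ => ?_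
      have : w' j = c j j + v j := rfl
      linarith
    rw [hFσ₀]
    linarith
  have hbsum : ∑ j : Fin n, f (b j) = ∑ j : Fin n, f (w (j : ℕ)) :=
    Equiv.sum_comp σ₀ fun j => f (w (j : ℕ))
  have hval : ∫ z, f z ∂(empMeas u n) - ∫ z, f z ∂(empMeas w n)
      = (∑ i : Fin n, f (u (i : ℕ)) - ∑ i : Fin n, f (w (i : ℕ))) / n := by
    rw [integral_empMeas u n hflip.continuous, integral_empMeas w n hflip.continuous,
      div_sub_div_same, ← Fin.sum_univ_eq_sum_range (fun i => f (u i)) n,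
      ← Fin.sum_univ_eq_sum_range (fun i => f (w i)) n]
  have hF0 : 0 ≤ F σ₀ := Finset.sum_nonneg fun i _ => dist_nonneg
  have hge : F σ₀ / n ≤ |∫ z, f z ∂(empMeas u n) - ∫ z, f z ∂(empMeas w n)| := by
    rw [hval, abs_div, abs_of_nonneg (by positivity : (0:ℝ) ≤ (n:ℝ))]
    gcongr
    rw [← hbsum]
    exact hsumineq.trans (le_abs_self _)
  have hmem : |∫ z, f z ∂(empMeas u n) - ∫ z, f z ∂(empMeas w n)| ∈ S := ⟨f, hflip, hfbd, rfl⟩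
  show (⨅ σ : Equiv.Perm (Fin n), F σ / n) = sSup S
  apply le_antisymm
  · have h1 : (⨅ σ : Equiv.Perm (Fin n), F σ / n) ≤ F σ₀ / n :=
      ciInf_le (Set.Finite.bddBelow (Set.finite_range _)) σ₀
    exact h1.trans (hge.trans (le_csSup hbdd hmem))
  · exact csSup_le ⟨0, h0S⟩ fun r hr => le_ciInf fun σ => hub r hr σ
end AuxMeas

theorem stmt1 {X : Type*} [MetricSpace X] [TopologicalSpace.SeparableSpace X]
    [CompleteSpace X] [MeasurableSpace X] [BorelSpace X]
    (hd : ∃ C, ∀ a b : X, dist a b ≤ C)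
    (T : X → X) (hT : Continuous T) (x y : X) :
    meanOrbitalDist T x y
      = limsup (fun n => krDist (empMeas (fun i => T^[i] x) n)
          (empMeas (fun i => T^[i] y) n)) atTop := by
  obtain ⟨C, hC⟩ := hd
  refine Filter.limsup_congr ?_
  filter_upwards [eventually_ge_atTop 1] with n hn
  exact key hC (fun i => T^[i] x) (fun i => T^[i] y) hn
end

section
/- Let (X,T) be a Polish dynamical system. If x and y are quasi-regular points (i.e., their sequences of empirical measures m_T(x,n), m_T(y,n) converge weakly to measures μ_x, μ_y respectively), then Ē(x,y) = γ(μ_x, μ_y), where Ē is the mean orbital pseudo-metric and γ is the Kantorovich–Rubinshtein metric. -/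
open MeasureTheory Filter Topology
open scoped ENNReal NNReal

namespace KRA

open MeasureTheory Filter Topology Metric BoundedContinuousFunction Finset
open scoped ENNReal NNReal

variable {α : Type*}

def pathW (w : α → α → ℝ) : List α → ℝ
  | [] => 0
  | [_] => 0
  | a :: b :: l => w a b + pathW w (b :: l)

@[simp] lemma pathW_nil (w : α → α → ℝ) : pathW w [] = 0 := rfl
@[simp] lemma pathW_single (w : α → α → ℝ) (a : α) : pathW w [a] = 0 := rfl
@[simp] lemma pathW_cons_cons (w : α → α → ℝ) (a b : α) (l : List α) :
    pathW w (a :: b :: l) = w a b + pathW w (b :: l) := rfl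

lemma pathW_cons_head (w : α → α → ℝ) (i j : α) {L : List α} (h : L.head? = some j) :
    pathW w (i :: L) = w i j + pathW w L := by
  cases L with
  | nil => simp at h
  | cons a l => simp only [List.head?_cons, Option.some.injEq] at h; subst h; rfl

lemma pathW_append (w : α → α → ℝ) (P : List α) (i : α) (R : List α) :
    pathW w (P ++ i :: R) = pathW w (P ++ [i]) + pathW w (i :: R) := by
  induction P with
  | nil => simp
  | cons p P ih =>
    cases P with
    | nil => simp [pathW]
    | cons q Q =>
      simp only [List.cons_append, pathW_cons_cons] at *
      rw [ih]; ring

lemma map_sum_eq_range (g : α → ℝ) (d : α) (L : List α) :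
    (L.map g).sum = ∑ k ∈ Finset.range L.length, g (L.getD k d) := by
  induction L with
  | nil => simp
  | cons a l ih =>
    rw [List.map_cons, List.sum_cons, List.length_cons, Finset.sum_range_succ']
    simp [ih, add_comm]

lemma pathW_eq_range (w : α → α → ℝ) (d : α) (L : List α) :
    pathW w L = ∑ k ∈ Finset.range (L.length - 1), w (L.getD k d) (L.getD (k + 1) d) := by
  induction L with
  | nil => simp
  | cons a l ih =>
    cases l with
    | nil => simp
    | cons b m =>
      rw [pathW_cons_cons, ih]
      have hlen : (a :: b :: m).length - 1 = (m.length + 1) := by simp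
      rw [hlen, Finset.sum_range_succ']
      simp only [List.getD_cons_succ, List.getD_cons_zero, List.length_cons]
      rw [add_comm]
      congr 1

lemma cycle_eq [DecidableEq α] (w : α → α → ℝ) (d : α) (L : List α) (hL : L ≠ [])
    (hnd : L.Nodup) :
    (L.map (fun i => w i (L.formPerm i))).sum
      = pathW w L + w (L.getD (L.length - 1) d) (L.getD 0 d) := by
  have hlen : 0 < L.length := List.length_pos_iff.mpr hL
  rw [map_sum_eq_range _ d, pathW_eq_range w d]
  have hsplit : L.length = (L.length - 1) + 1 := by omega
  rw [hsplit, Finset.sum_range_succ, ← hsplit]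
  congr 1
  · apply Finset.sum_congr rfl
    intro k hk
    rw [Finset.mem_range] at hk
    have hk1 : k < L.length := by omega
    have hk2 : k + 1 < L.length := by omega
    rw [List.getD_eq_getElem _ _ hk1, List.getD_eq_getElem _ _ hk2,
      List.formPerm_apply_getElem _ hnd _ hk1]
    simp only [Nat.mod_eq_of_lt hk2]
  · have h1 : L.length - 1 < L.length := by omega
    have h0 : 0 < L.length := hlen
    rw [List.getD_eq_getElem _ _ h1, List.getD_eq_getElem _ _ h0,
      List.formPerm_apply_getElem _ hnd _ h1]
    have hh : L.length - 1 + 1 = L.length := by omega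
    simp only [hh, Nat.mod_self]

lemma exists_potential [Fintype α] [DecidableEq α] (w : α → α → ℝ)
    (h0 : ∀ i, w i i = 0)
    (hcyc : ∀ L : List α, L ≠ [] → L.Nodup →
      0 ≤ (L.map (fun i => w i (L.formPerm i))).sum) :
    ∃ t : α → ℝ, ∀ i j, t i ≤ t j + w i j := by
  classical
  set S : α → Set ℝ := fun i => pathW w '' {L : List α | L.Nodup ∧ L.head? = some i} with hS
  have hfin : ∀ i, (S i).Finite := by
    intro i
    apply Set.Finite.image
    apply Set.Finite.subset (List.finite_length_le α (Fintype.card α))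
    intro L hL
    exact hL.1.length_le_card
  have hne : ∀ i, (S i).Nonempty := fun i => ⟨pathW w [i], ⟨[i], by simp, rfl⟩⟩
  refine ⟨fun i => sInf (S i), fun i j => ?_⟩
  show sInf (S i) ≤ sInf (S j) + w i j
  obtain ⟨L, ⟨hnd, hhead⟩, hWL⟩ := (hne j).csInf_mem (hfin j)
  have hLne : L ≠ [] := by intro h; subst h; simp at hhead
  have hle : ∀ i (L' : List α), L'.Nodup → L'.head? = some i → sInf (S i) ≤ pathW w L' :=
    fun i L' h1 h2 => csInf_le (hfin i).bddBelow ⟨L', ⟨h1, h2⟩, rfl⟩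
  by_cases hij : i = j
  · subst hij; rw [h0]; simp
  by_cases hiL : i ∈ L
  · obtain ⟨P, R, hPR⟩ := List.append_of_mem hiL
    cases P with
    | nil =>
      exfalso
      apply hij
      rw [hPR] at hhead
      simpa using hhead
    | cons p P' =>
      have hpj : p = j := by
        rw [hPR] at hhead
        simpa using hhead
      subst hpj
      subst hPR
      have hdec := pathW_append w (p :: P') i R
      have hiRnd : (i :: R).Nodup := hnd.of_append_right
      have hQsub : List.Sublist ((p :: P') ++ [i]) ((p :: P') ++ i :: R) :=
        List.Sublist.append_left (List.Sublist.cons₂ i (List.nil_sublist R)) _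
      have hQnd : ((p :: P') ++ [i]).Nodup := hnd.sublist hQsub
      have hQne : (p :: P') ++ [i] ≠ [] := by simp
      have hcyc' := hcyc _ hQne hQnd
      rw [cycle_eq w i _ hQne hQnd] at hcyc'
      have hlast : ((p :: P') ++ [i]).getD (((p :: P') ++ [i]).length - 1) i = i := by
        rw [List.getD_eq_getElem _ _ (by simp)]
        rw [List.getElem_append_right] <;> simp
      have hhead0 : ((p :: P') ++ [i]).getD 0 i = p := by simp
      rw [hlast, hhead0] at hcyc'
      have h1 : sInf (S i) ≤ pathW w (i :: R) := hle i _ hiRnd (by simp)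
      have h2 : sInf (S p) = pathW w ((p :: P') ++ i :: R) := hWL.symm
      rw [h2, hdec]
      linarith
  · have h1 : sInf (S i) ≤ pathW w (i :: L) :=
      hle i _ (List.nodup_cons.mpr ⟨hiL, hnd⟩) (by simp)
    rw [pathW_cons_head w i j hhead] at h1
    rw [hWL] at h1
    linarith

lemma exists_dual {X : Type*} [MetricSpace X] {n : ℕ} (hn : 0 < n)
    (a b : Fin n → X) (C : ℝ) (hC : ∀ p q : X, dist p q ≤ C) :
    ∃ f : X → ℝ, LipschitzWith 1 f ∧ (∀ z, |f z| ≤ C) ∧ ∃ σ₀ : Equiv.Perm (Fin n),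
      ∑ i, dist (a i) (b (σ₀ i)) ≤ ∑ i, f (a i) - ∑ i, f (b i) := by
  classical
  haveI : NeZero n := ⟨hn.ne'⟩
  obtain ⟨σ₀, -, hopt⟩ := Finset.exists_min_image Finset.univ
    (fun σ : Equiv.Perm (Fin n) => ∑ i, dist (a i) (b (σ i))) ⟨1, Finset.mem_univ 1⟩
  set b' : Fin n → X := fun i => b (σ₀ i) with hb'
  have hopt' : ∀ τ : Equiv.Perm (Fin n),
      ∑ i, dist (a i) (b' i) ≤ ∑ i, dist (a i) (b' (τ i)) := by
    intro τ
    have := hopt (σ₀ * τ) (Finset.mem_univ _)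
    simpa [hb', Equiv.Perm.mul_apply] using this
  set w : Fin n → Fin n → ℝ :=
    fun i j => dist (a i) (b' j) - dist (a i) (b' i) with hw
  have h0 : ∀ i, w i i = 0 := by intro i; simp [hw]
  have hcyc : ∀ L : List (Fin n), L ≠ [] → L.Nodup →
      0 ≤ (L.map (fun i => w i (L.formPerm i))).sum := by
    intro L _ hnd
    have hsum : (L.map (fun i => w i (L.formPerm i))).sum
        = ∑ i ∈ L.toFinset, w i (L.formPerm i) :=
      (List.sum_toFinset _ hnd).symm
    rw [hsum]
    have hext : ∑ i ∈ L.toFinset, w i (L.formPerm i)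
        = ∑ i : Fin n, w i (L.formPerm i) := by
      apply Finset.sum_subset (Finset.subset_univ _)
      intro i _ hi
      rw [List.formPerm_apply_of_notMem (by simpa using hi)]
      exact h0 i
    rw [hext]
    have hsplit : ∑ i : Fin n, w i (L.formPerm i)
        = (∑ i, dist (a i) (b' (L.formPerm i))) - ∑ i, dist (a i) (b' i) := by
      rw [← Finset.sum_sub_distrib]
    rw [hsplit]
    have := hopt' L.formPerm
    linarith
  obtain ⟨t, ht⟩ := exists_potential w h0 hcyc
  have hne : (Finset.univ : Finset (Fin n)).Nonempty := Finset.univ_nonempty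
  set f₀ : X → ℝ := fun z => Finset.univ.inf' hne (fun j => t j + dist z (b' j)) with hf₀
  have hf₀le : ∀ z z', f₀ z ≤ f₀ z' + dist z z' := by
    intro z z'
    obtain ⟨j, -, hj⟩ := Finset.exists_mem_eq_inf' hne (fun j => t j + dist z' (b' j))
    have h1 : f₀ z ≤ t j + dist z (b' j) := Finset.inf'_le _ (Finset.mem_univ j)
    have h2 : dist z (b' j) ≤ dist z z' + dist z' (b' j) := dist_triangle _ _ _
    have h3 : f₀ z' = t j + dist z' (b' j) := hj
    linarith
  have hlip : LipschitzWith 1 f₀ := by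
    apply LipschitzWith.of_dist_le_mul
    intro z z'
    rw [Real.dist_eq, NNReal.coe_one, one_mul, abs_sub_le_iff]
    constructor
    · linarith [hf₀le z z']
    · have h := hf₀le z' z
      rw [dist_comm z' z] at h
      linarith
  have hfb : ∀ i, f₀ (b' i) ≤ t i := by
    intro i
    have h := Finset.inf'_le (fun j => t j + dist (b' i) (b' j)) (Finset.mem_univ i)
    calc f₀ (b' i) ≤ t i + dist (b' i) (b' i) := h
    _ = t i := by simp
  have hfa : ∀ i, t i + dist (a i) (b' i) ≤ f₀ (a i) := by
    intro i
    apply Finset.le_inf'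
    intro j _
    have h := ht i j
    rw [hw] at h
    dsimp at h
    linarith
  set i₀ : Fin n := ⟨0, hn⟩ with hi₀
  set f : X → ℝ := fun z => f₀ z - f₀ (b' i₀) with hf
  refine ⟨f, ?_, ?_, σ₀, ?_⟩
  · have hfe : f = fun z => f₀ z - f₀ (b' i₀) := hf
    rw [hfe]
    apply LipschitzWith.of_dist_le_mul
    intro z z'
    have h := hlip.dist_le_mul z z'
    simpa [Real.dist_eq, sub_sub_sub_cancel_right] using h
  · intro z
    have h1 := hf₀le z (b' i₀)
    have h2 := hf₀le (b' i₀) z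
    rw [dist_comm (b' i₀) z] at h2
    have h3 : dist z (b' i₀) ≤ C := hC _ _
    rw [hf]
    dsimp only
    rw [abs_le]
    constructor <;> linarith
  · have hsum : ∑ i, f (b i) = ∑ i, f (b' i) := by
      rw [hb']
      exact (Equiv.sum_comp σ₀ (fun i => f (b i))).symm
    have hgoal : ∑ i, dist (a i) (b (σ₀ i)) = ∑ i, dist (a i) (b' i) := rfl
    rw [hgoal, hsum]
    have heq : ∑ i, f (a i) - ∑ i, f (b' i) = ∑ i, f₀ (a i) - ∑ i, f₀ (b' i) := by
      rw [hf]
      dsimp only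
      rw [Finset.sum_sub_distrib, Finset.sum_sub_distrib]
      ring
    rw [heq]
    have hA : ∑ i, (t i + dist (a i) (b' i)) ≤ ∑ i, f₀ (a i) :=
      Finset.sum_le_sum (fun i _ => hfa i)
    have hB : ∑ i, f₀ (b' i) ≤ ∑ i, t i := Finset.sum_le_sum (fun i _ => hfb i)
    rw [Finset.sum_add_distrib] at hA
    linarith

section MeasureAux

variable {X : Type*} [MetricSpace X] [MeasurableSpace X] [BorelSpace X]

lemma integral_sub_le_of_lp (μ ν : Measure X) [IsProbabilityMeasure μ] [IsProbabilityMeasure ν]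
    (f : X →ᵇ ℝ) (hf : LipschitzWith 1 ⇑f)
    (hnn : ∀ x, 0 ≤ f x) {ε : ℝ} (hε : 0 < ε)
    (h : levyProkhorovEDist μ ν < ENNReal.ofReal ε) :
    ∫ x, f x ∂μ - ∫ x, f x ∂ν ≤ ε * (1 + ‖f‖) := by
  have key := BoundedContinuousFunction.integral_le_of_levyProkhorovEDist_lt μ ν hε h f
    (Eventually.of_forall hnn)
  set g : X →ᵇ ℝ := f + BoundedContinuousFunction.const X ε with hg
  have hgapp : ∀ x, g x = f x + ε := fun x => rfl
  have hsubset : ∀ t : ℝ, thickening ε {a | t ≤ f a} ⊆ {a | t ≤ g a} := by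
    intro t z hz
    rw [mem_thickening_iff] at hz
    obtain ⟨w, hw, hdist⟩ := hz
    have h1 : f w - f z ≤ dist w z := by
      have h2 := hf.dist_le_mul w z
      rw [NNReal.coe_one, one_mul, Real.dist_eq] at h2
      exact (abs_le.mp h2).2
    have h3 : (t : ℝ) ≤ f w := hw
    simp only [Set.mem_setOf_eq, hgapp]
    rw [dist_comm] at hdist
    linarith
  have i1 : IntegrableOn (fun t => (ν (thickening ε {a | t ≤ f a})).toReal)
      (Set.Ioc 0 ‖f‖) volume := by
    apply Measure.integrableOn_of_bounded (M := (ν Set.univ).toReal) measure_Ioc_lt_top.ne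
    · apply (Measurable.ennreal_toReal (Antitone.measurable ?_)).aestronglyMeasurable
      intro s t hst
      exact measure_mono (thickening_subset_of_subset ε (fun ω h => hst.trans h))
    · refine Eventually.of_forall fun t => ?_
      rw [Real.norm_eq_abs, ENNReal.abs_toReal]
      exact ENNReal.toReal_mono (measure_ne_top _ _) (measure_mono (Set.subset_univ _))
  have i2big : IntegrableOn (fun t => (ν {a | t ≤ g a}).toReal) (Set.Ioc 0 ‖g‖) volume := by
    apply Measure.integrableOn_of_bounded (M := (ν Set.univ).toReal) measure_Ioc_lt_top.ne
    · apply (Measurable.ennreal_toReal (Antitone.measurable ?_)).aestronglyMeasurable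
      intro s t hst
      exact measure_mono (fun ω h => hst.trans h)
    · refine Eventually.of_forall fun t => ?_
      rw [Real.norm_eq_abs, ENNReal.abs_toReal]
      exact ENNReal.toReal_mono (measure_ne_top _ _) (measure_mono (Set.subset_univ _))
  have hnorm : ‖f‖ ≤ ‖g‖ := by
    apply (BoundedContinuousFunction.norm_le (norm_nonneg g)).mpr
    intro x
    rw [Real.norm_eq_abs, abs_of_nonneg (hnn x)]
    calc f x ≤ f x + ε := by linarith
    _ = g x := (hgapp x).symm
    _ ≤ |g x| := le_abs_self _
    _ ≤ ‖g‖ := by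
        rw [← Real.norm_eq_abs]
        exact g.norm_coe_le_norm x
  have i2 : IntegrableOn (fun t => (ν {a | t ≤ g a}).toReal) (Set.Ioc 0 ‖f‖) volume :=
    i2big.mono_set (Set.Ioc_subset_Ioc_right hnorm)
  have step1 : (∫ t in Set.Ioc 0 ‖f‖, (ν (thickening ε {a | t ≤ f a})).toReal)
      ≤ ∫ t in Set.Ioc 0 ‖f‖, (ν {a | t ≤ g a}).toReal := by
    apply setIntegral_mono i1 i2
    intro t
    exact ENNReal.toReal_mono (measure_ne_top _ _) (measure_mono (hsubset t))
  have step2 : (∫ t in Set.Ioc 0 ‖f‖, (ν {a | t ≤ g a}).toReal)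
      ≤ ∫ t in Set.Ioc 0 ‖g‖, (ν {a | t ≤ g a}).toReal := by
    apply setIntegral_mono_set i2big
    · exact Eventually.of_forall fun t => ENNReal.toReal_nonneg
    · exact HasSubset.Subset.eventuallyLE (Set.Ioc_subset_Ioc_right hnorm)
  have step3 : (∫ t in Set.Ioc 0 ‖g‖, (ν {a | t ≤ g a}).toReal) = ∫ x, g x ∂ν := by
    rw [BoundedContinuousFunction.integral_eq_integral_meas_le g ν
      (Eventually.of_forall (fun x => by simp only [Pi.zero_apply, hgapp]; linarith [hnn x]))]
    rfl
  have step4 : ∫ x, g x ∂ν = (∫ x, f x ∂ν) + ε := by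
    have hcongr : ∫ x, g x ∂ν = ∫ x, (f x + ε) ∂ν := by
      apply integral_congr_ae
      exact Eventually.of_forall (fun x => hgapp x)
    rw [hcongr, integral_add (f.integrable ν) (integrable_const ε), integral_const]
    simp
  have hfinal : ∫ x, f x ∂μ ≤ (∫ x, f x ∂ν) + ε + ε * ‖f‖ := by
    calc ∫ x, f x ∂μ
        ≤ (∫ t in Set.Ioc 0 ‖f‖, (ν (thickening ε {a | t ≤ f a})).toReal) + ε * ‖f‖ := key
    _ ≤ (∫ t in Set.Ioc 0 ‖g‖, (ν {a | t ≤ g a}).toReal) + ε * ‖f‖ := by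
        linarith [step1, step2]
    _ = (∫ x, f x ∂ν) + ε + ε * ‖f‖ := by rw [step3, step4]
  linarith [hfinal]

lemma abs_integral_sub_le_of_lp (μ ν : Measure X)
    [IsProbabilityMeasure μ] [IsProbabilityMeasure ν]
    (f : X →ᵇ ℝ) (hf : LipschitzWith 1 ⇑f) (C : ℝ) (hC0 : 0 ≤ C) (hb : ∀ z, |f z| ≤ C)
    {ε : ℝ} (hε : 0 < ε) (h : levyProkhorovEDist μ ν < ENNReal.ofReal ε) :
    |∫ x, f x ∂μ - ∫ x, f x ∂ν| ≤ ε * (1 + 2 * C) := by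
  set g : X →ᵇ ℝ := f + BoundedContinuousFunction.const X C with hg
  have hgapp : ∀ x, g x = f x + C := fun x => rfl
  have hgnn : ∀ x, 0 ≤ g x := by
    intro x
    rw [hgapp]
    have := (abs_le.mp (hb x)).1
    linarith
  have hglip : LipschitzWith 1 ⇑g := by
    apply LipschitzWith.of_dist_le_mul
    intro z z'
    have h2 := hf.dist_le_mul z z'
    simp only [Real.dist_eq, hgapp, add_sub_add_right_eq_sub] at h2 ⊢
    exact h2
  have hgnorm : ‖g‖ ≤ 2 * C := by
    apply (BoundedContinuousFunction.norm_le (by positivity)).mpr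
    intro x
    rw [Real.norm_eq_abs, hgapp, abs_le]
    have := abs_le.mp (hb x)
    constructor <;> linarith [this.1, this.2]
  have hint : ∀ (ρ : Measure X) [IsProbabilityMeasure ρ], ∫ x, g x ∂ρ = (∫ x, f x ∂ρ) + C := by
    intro ρ _
    have hcongr : ∫ x, g x ∂ρ = ∫ x, (f x + C) ∂ρ :=
      integral_congr_ae (Eventually.of_forall (fun x => hgapp x))
    rw [hcongr, integral_add (f.integrable ρ) (integrable_const C), integral_const]
    simp
  have h1 := integral_sub_le_of_lp μ ν g hglip hgnn hε h
  have h2 := integral_sub_le_of_lp ν μ g hglip hgnn hε (by rwa [levyProkhorovEDist_comm])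
  rw [hint μ, hint ν] at h1 h2
  have hband : ε * (1 + ‖g‖) ≤ ε * (1 + 2 * C) := by
    apply mul_le_mul_of_nonneg_left _ hε.le
    linarith
  rw [abs_le]
  constructor <;> [linarith [h2, hband]; linarith [h1, hband]]

lemma tendsto_lp [TopologicalSpace.SeparableSpace X]
    {P : ℕ → ProbabilityMeasure X} {μ : ProbabilityMeasure X}
    (h : Tendsto P atTop (𝓝 μ)) {ε : ℝ} (hε : 0 < ε) :
    ∀ᶠ n in atTop, levyProkhorovEDist (P n).toMeasure μ.toMeasure < ENNReal.ofReal ε := by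
  have h2 : Tendsto (fun n => (LevyProkhorov.probabilityMeasureHomeomorph (Ω := X)) (P n))
      atTop (𝓝 ((LevyProkhorov.probabilityMeasureHomeomorph (Ω := X)) μ)) :=
    ((LevyProkhorov.probabilityMeasureHomeomorph (Ω := X)).continuous.tendsto _).comp h
  obtain ⟨N, hN⟩ := Metric.tendsto_atTop.mp h2 ε hε
  filter_upwards [eventually_ge_atTop N] with n hn
  have hd := hN n hn
  rw [LevyProkhorov.dist_probabilityMeasure_def, levyProkhorovDist] at hd
  exact (ENNReal.lt_ofReal_iff_toReal_lt (levyProkhorovEDist_ne_top _ _)).mpr hd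

end MeasureAux

end KRA

open Metric BoundedContinuousFunction Finset

section Main

variable {Y : Type*} [MetricSpace Y] [MeasurableSpace Y] [BorelSpace Y]

lemma KRA.integral_avgDirac (z : ℕ → Y) (n : ℕ) (f : Y →ᵇ ℝ) :
    ∫ w, f w ∂((avgDirac z n : ProbabilityMeasure Y) : Measure Y) =
      (∑ i ∈ Finset.range (max n 1), f (z i)) / (max n 1 : ℕ) := by
  have hcoe : ((avgDirac z n : ProbabilityMeasure Y) : Measure Y)
      = ((max n 1 : ℕ) : ℝ≥0∞)⁻¹ • ∑ i ∈ Finset.range (max n 1), Measure.dirac (z i) := rfl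
  rw [hcoe, integral_smul_measure, integral_finset_sum_measure (fun i _ => f.integrable _)]
  have hterm : ∀ i ∈ Finset.range (max n 1), ∫ w, f w ∂(Measure.dirac (z i)) = f (z i) :=
    fun i _ => integral_dirac _ _
  rw [Finset.sum_congr rfl hterm]
  rw [ENNReal.toReal_inv, smul_eq_mul, inv_mul_eq_div]
  norm_num

end Main

theorem stmt2 {X : Type*} [MetricSpace X] [TopologicalSpace.SeparableSpace X]
    [CompleteSpace X] [MeasurableSpace X] [BorelSpace X]
    (hd : ∃ C, ∀ a b : X, dist a b ≤ C)
    (T : X → X) (hT : Continuous T) (x y : X) (μx μy : ProbabilityMeasure X)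
    (hx : genericFor T x μx) (hy : genericFor T y μy) :
    meanOrbitalDist T x y = krDist μx.toMeasure μy.toMeasure := by
  classical
  obtain ⟨C₀, hC₀⟩ := hd
  set C : ℝ := max C₀ 0 with hCdef
  have hC : ∀ p q : X, dist p q ≤ C := fun p q => le_trans (hC₀ p q) (le_max_left _ _)
  have hC0 : 0 ≤ C := le_max_right _ _
  set A : ℕ → ℝ := fun n => ⨅ σ : Equiv.Perm (Fin n),
      (∑ i : Fin n, dist (T^[(i : ℕ)] x) (T^[((σ i : Fin n) : ℕ)] y)) / n with hA
  set S := { r : ℝ | ∃ f : X → ℝ, LipschitzWith 1 f ∧ (∃ C, ∀ z, |f z| ≤ C) ∧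
      r = |∫ z, f z ∂μx.toMeasure - ∫ z, f z ∂μy.toMeasure| } with hSdef
  have hkr : krDist μx.toMeasure μy.toMeasure = sSup S := rfl
  have hmod : meanOrbitalDist T x y = Filter.limsup A Filter.atTop := rfl
  -- basic bounds on A
  have hbb : ∀ n : ℕ, BddBelow (Set.range fun σ : Equiv.Perm (Fin n) =>
      (∑ i : Fin n, dist (T^[(i : ℕ)] x) (T^[((σ i : Fin n) : ℕ)] y)) / n) := by
    intro n
    refine ⟨0, ?_⟩
    rintro r ⟨σ, rfl⟩
    exact div_nonneg (Finset.sum_nonneg fun i _ => dist_nonneg) (Nat.cast_nonneg n)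
  have hAnn : ∀ n, 0 ≤ A n := by
    intro n
    apply le_ciInf
    intro σ
    exact div_nonneg (Finset.sum_nonneg fun i _ => dist_nonneg) (Nat.cast_nonneg n)
  have hAbd : ∀ n, A n ≤ C := by
    intro n
    apply ciInf_le_of_le (hbb n) 1
    rcases Nat.eq_zero_or_pos n with h0 | hn
    · subst h0
      simpa using hC0
    · have hnR : (0 : ℝ) < n := by exact_mod_cast hn
      rw [div_le_iff₀ hnR]
      calc (∑ i : Fin n, dist (T^[(i : ℕ)] x) (T^[(((1 : Equiv.Perm (Fin n)) i : Fin n) : ℕ)] y))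
          ≤ ∑ _i : Fin n, C := Finset.sum_le_sum fun i _ => hC _ _
      _ = C * n := by simp [mul_comm]
  have hABdd : Filter.IsBoundedUnder (· ≤ ·) Filter.atTop A :=
    ⟨C, Filter.eventually_map.mpr (Filter.Eventually.of_forall hAbd)⟩
  have hABdd' : Filter.IsBoundedUnder (· ≥ ·) Filter.atTop A :=
    ⟨0, Filter.eventually_map.mpr (Filter.Eventually.of_forall hAnn)⟩
  -- the integral formula for empirical measures, specialized
  have hInt : ∀ (z : ℕ → X) (n : ℕ), 1 ≤ n → ∀ f : X →ᵇ ℝ,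
      ∫ w, f w ∂((avgDirac z n : ProbabilityMeasure X) : Measure X)
        = (∑ i ∈ Finset.range n, f (z i)) / n := by
    intro z n hn f
    rw [KRA.integral_avgDirac z n f, Nat.max_eq_left hn]
  -- easy direction: every element of S is ≤ limsup A
  have easy : ∀ r ∈ S, r ≤ Filter.limsup A Filter.atTop := by
    rintro r ⟨f, hLip, ⟨B, hB⟩, rfl⟩
    set F : X →ᵇ ℝ := BoundedContinuousFunction.ofNormedAddCommGroup f hLip.continuous B
      (fun z => by rw [Real.norm_eq_abs]; exact hB z) with hFdef
    have hFcoe : ⇑F = f := rfl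
    have hxT := (MeasureTheory.ProbabilityMeasure.tendsto_iff_forall_integral_tendsto.mp hx) F
    have hyT := (MeasureTheory.ProbabilityMeasure.tendsto_iff_forall_integral_tendsto.mp hy) F
    have hTd := (hxT.sub hyT).abs
    have key : ∀ n, 1 ≤ n →
        |(∫ w, F w ∂((avgDirac (fun i => T^[i] x) n : ProbabilityMeasure X) : Measure X))
          - ∫ w, F w ∂((avgDirac (fun i => T^[i] y) n : ProbabilityMeasure X) : Measure X)|
          ≤ A n := by
      intro n hn1
      apply le_ciInf
      intro σ
      rw [hInt _ _ hn1 F, hInt _ _ hn1 F, div_sub_div_same, abs_div,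
        abs_of_nonneg (show (0:ℝ) ≤ (n:ℝ) from Nat.cast_nonneg n)]
      have hnR : (0 : ℝ) < n := by exact_mod_cast hn1
      rw [div_le_div_iff_of_pos_right hnR]
      rw [← Fin.sum_univ_eq_sum_range (fun i => F (T^[i] x)) n,
        ← Fin.sum_univ_eq_sum_range (fun i => F (T^[i] y)) n]
      rw [← Equiv.sum_comp σ (fun i : Fin n => F (T^[(i : ℕ)] y))]
      rw [← Finset.sum_sub_distrib]
      calc |∑ i : Fin n, (F (T^[(i : ℕ)] x) - F (T^[((σ i : Fin n) : ℕ)] y))|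
          ≤ ∑ i : Fin n, |F (T^[(i : ℕ)] x) - F (T^[((σ i : Fin n) : ℕ)] y)| :=
            Finset.abs_sum_le_sum_abs _ _
      _ ≤ ∑ i : Fin n, dist (T^[(i : ℕ)] x) (T^[((σ i : Fin n) : ℕ)] y) := by
          apply Finset.sum_le_sum
          intro i _
          have h2 := hLip.dist_le_mul (T^[(i : ℕ)] x) (T^[((σ i : Fin n) : ℕ)] y)
          rw [NNReal.coe_one, one_mul, Real.dist_eq] at h2
          exact h2
    have hev : ∀ᶠ n in Filter.atTop,
        (fun n => |(∫ w, F w ∂((avgDirac (fun i => T^[i] x) n : ProbabilityMeasure X) : Measure X))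
          - ∫ w, F w ∂((avgDirac (fun i => T^[i] y) n : ProbabilityMeasure X) : Measure X)|) n
          ≤ A n :=
      Filter.eventually_atTop.mpr ⟨1, fun n hn => key n hn⟩
    have hlim := hTd.limsup_eq
    calc |∫ z, f z ∂μx.toMeasure - ∫ z, f z ∂μy.toMeasure|
        = Filter.limsup (fun n =>
            |(∫ w, F w ∂((avgDirac (fun i => T^[i] x) n : ProbabilityMeasure X) : Measure X))
            - ∫ w, F w ∂((avgDirac (fun i => T^[i] y) n : ProbabilityMeasure X) : Measure X)|)
            Filter.atTop := hlim.symm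
    _ ≤ Filter.limsup A Filter.atTop :=
        Filter.limsup_le_limsup hev (hTd.isBoundedUnder_ge.isCoboundedUnder_le) hABdd
  have hlimnn : 0 ≤ Filter.limsup A Filter.atTop :=
    Filter.le_limsup_of_frequently_le (Filter.Frequently.of_forall hAnn) hABdd
  -- bddAbove of S
  have hSbdd : BddAbove S := by
    refine ⟨2 * C, ?_⟩
    rintro r ⟨f, hLip, ⟨B, hB⟩, rfl⟩
    set g : X → ℝ := fun z => f z - f x with hg
    have hgb : ∀ z, |g z| ≤ C := by
      intro z
      have h2 := hLip.dist_le_mul z x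
      rw [NNReal.coe_one, one_mul, Real.dist_eq] at h2
      exact h2.trans (hC z x)
    set G : X →ᵇ ℝ := BoundedContinuousFunction.ofNormedAddCommGroup g
      (hLip.continuous.sub continuous_const) C
      (fun z => by rw [Real.norm_eq_abs]; exact hgb z) with hGdef
    have hGcoe : ⇑G = g := rfl
    have hint : ∀ (ρ : Measure X), IsProbabilityMeasure ρ →
        ∫ w, f w ∂ρ = (∫ w, G w ∂ρ) + f x := by
      intro ρ hρ
      have h1 : ∫ w, f w ∂ρ = ∫ w, (G w + f x) ∂ρ := by
        apply integral_congr_ae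
        apply Filter.Eventually.of_forall
        intro w
        show f w = g w + f x
        simp [hg]
      rw [h1, integral_add (G.integrable ρ) (integrable_const _), integral_const]
      simp
    rw [hint μx.toMeasure inferInstance, hint μy.toMeasure inferInstance]
    have hb1 : |∫ w, G w ∂μx.toMeasure| ≤ C := by
      have h2 := norm_integral_le_of_norm_le_const (μ := μx.toMeasure) (f := fun w => G w) (C := C)
        (Filter.Eventually.of_forall fun z => by rw [Real.norm_eq_abs]; exact hgb z)
      simpa using h2
    have hb2 : |∫ w, G w ∂μy.toMeasure| ≤ C := by
      have h2 := norm_integral_le_of_norm_le_const (μ := μy.toMeasure) (f := fun w => G w) (C := C)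
        (Filter.Eventually.of_forall fun z => by rw [Real.norm_eq_abs]; exact hgb z)
      simpa using h2
    rw [add_sub_add_right_eq_sub]
    have := abs_sub (∫ w, G w ∂μx.toMeasure) (∫ w, G w ∂μy.toMeasure)
    linarith [abs_le.mp hb1, abs_le.mp hb2, abs_sub_abs_le_abs_sub (∫ w, G w ∂μx.toMeasure) (∫ w, G w ∂μy.toMeasure)]
  -- hard direction
  have hard : Filter.limsup A Filter.atTop ≤ sSup S := by
    apply le_of_forall_pos_le_add
    intro ε hε
    set δ : ℝ := ε / (2 * (1 + 2 * C) + 1) with hδdef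
    have hK : (0 : ℝ) < 2 * (1 + 2 * C) + 1 := by linarith
    have hδ : 0 < δ := div_pos hε hK
    have hδε : δ * (2 * (1 + 2 * C) + 1) = ε := div_mul_cancel₀ ε hK.ne'
    have hLPx := KRA.tendsto_lp hx hδ
    have hLPy := KRA.tendsto_lp hy hδ
    have hev : ∀ᶠ n in Filter.atTop, A n ≤ sSup S + ε := by
      filter_upwards [hLPx, hLPy, Filter.eventually_ge_atTop 1] with n hnx hny hn1
      have hn : 0 < n := hn1
      have hnR : (0 : ℝ) < n := by exact_mod_cast hn
      obtain ⟨f, hLip, hfb, σ₀, hdual⟩ := KRA.exists_dual hn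
        (fun i : Fin n => T^[(i : ℕ)] x) (fun i : Fin n => T^[(i : ℕ)] y) C hC
      set F : X →ᵇ ℝ := BoundedContinuousFunction.ofNormedAddCommGroup f hLip.continuous C
        (fun z => by rw [Real.norm_eq_abs]; exact hfb z) with hFdef
      have hFcoe : ⇑F = f := rfl
      have hFlip : LipschitzWith 1 ⇑F := hLip
      have e1 : A n ≤ (∑ i : Fin n, dist (T^[(i : ℕ)] x) (T^[((σ₀ i : Fin n) : ℕ)] y)) / n :=
        ciInf_le (hbb n) σ₀
      have e2 : (∑ i : Fin n, dist (T^[(i : ℕ)] x) (T^[((σ₀ i : Fin n) : ℕ)] y)) / n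
          ≤ ((∑ i : Fin n, f (T^[(i : ℕ)] x)) - ∑ i : Fin n, f (T^[(i : ℕ)] y)) / n := by
        rw [div_le_div_iff_of_pos_right hnR]
        exact hdual
      have hfx : ∑ i : Fin n, f (T^[(i : ℕ)] x) = ∑ i ∈ Finset.range n, f (T^[i] x) :=
        Fin.sum_univ_eq_sum_range (fun i => f (T^[i] x)) n
      have hfy : ∑ i : Fin n, f (T^[(i : ℕ)] y) = ∑ i ∈ Finset.range n, f (T^[i] y) :=
        Fin.sum_univ_eq_sum_range (fun i => f (T^[i] y)) n
      have e3x : ∫ w, F w ∂((avgDirac (fun i => T^[i] x) n : ProbabilityMeasure X) : Measure X)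
          = (∑ i ∈ Finset.range n, f (T^[i] x)) / n := hInt _ _ hn1 F
      have e3y : ∫ w, F w ∂((avgDirac (fun i => T^[i] y) n : ProbabilityMeasure X) : Measure X)
          = (∑ i ∈ Finset.range n, f (T^[i] y)) / n := hInt _ _ hn1 F
      have e4 : (∫ w, F w ∂μx.toMeasure) - ∫ w, F w ∂μy.toMeasure ≤ sSup S := by
        apply le_trans (le_abs_self _)
        apply le_csSup hSbdd
        exact ⟨f, hLip, ⟨C, hfb⟩, rfl⟩
      have e5 := KRA.abs_integral_sub_le_of_lp
        ((avgDirac (fun i => T^[i] x) n : ProbabilityMeasure X) : Measure X) μx.toMeasure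
        F hFlip C hC0 (fun z => hfb z) hδ hnx
      have e6 := KRA.abs_integral_sub_le_of_lp
        ((avgDirac (fun i => T^[i] y) n : ProbabilityMeasure X) : Measure X) μy.toMeasure
        F hFlip C hC0 (fun z => hfb z) hδ hny
      have hsplit : ((∑ i : Fin n, f (T^[(i : ℕ)] x)) - ∑ i : Fin n, f (T^[(i : ℕ)] y)) / n
          = (∫ w, F w ∂((avgDirac (fun i => T^[i] x) n : ProbabilityMeasure X) : Measure X))
            - ∫ w, F w ∂((avgDirac (fun i => T^[i] y) n : ProbabilityMeasure X) : Measure X) := by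
        rw [e3x, e3y, hfx, hfy, sub_div]
      obtain ⟨e5a, e5b⟩ := abs_le.mp e5
      obtain ⟨e6a, e6b⟩ := abs_le.mp e6
      have hrw : 2 * (δ * (1 + 2 * C)) + δ = ε := by rw [← hδε]; ring
      calc A n ≤ (∑ i : Fin n, dist (T^[(i : ℕ)] x) (T^[((σ₀ i : Fin n) : ℕ)] y)) / n := e1
      _ ≤ ((∑ i : Fin n, f (T^[(i : ℕ)] x)) - ∑ i : Fin n, f (T^[(i : ℕ)] y)) / n := e2
      _ = (∫ w, F w ∂((avgDirac (fun i => T^[i] x) n : ProbabilityMeasure X) : Measure X))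
            - ∫ w, F w ∂((avgDirac (fun i => T^[i] y) n : ProbabilityMeasure X) : Measure X) :=
          hsplit
      _ ≤ sSup S + ε := by linarith
    exact Filter.limsup_le_of_le hABdd'.isCoboundedUnder_le hev
  rw [hmod, hkr]
  exact le_antisymm hard (Real.sSup_le easy hlimnn)
end

section
/- Let (X,T) be a Polish dynamical system. The set Q_T(X) of quasi-regular points (points x for which the empirical measures m_T(x,n) converge in the weak* topology) is closed with respect to the mean orbital pseudo-metric Ē; i.e., if x_k ∈ Q_T(X) and Ē(x_k, x) → 0, then x ∈ Q_T(X). -/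
open MeasureTheory Filter Topology
open scoped ENNReal NNReal

set_option linter.unusedSectionVars false
namespace Stmt3Aux
open Metric Set

section ENNRealLimsup

variable {f g : ℕ → ℝ≥0∞}

lemma elimsup_add_le (f g : ℕ → ℝ≥0∞) :
    limsup (fun n => f n + g n) atTop ≤ limsup f atTop + limsup g atTop := by
  rcases eq_top_or_lt_top (limsup f atTop) with h | h
  · rw [h, top_add]; exact le_top
  rcases eq_top_or_lt_top (limsup g atTop) with h' | h'
  · rw [h', add_top]; exact le_top
  refine ENNReal.le_of_forall_pos_le_add fun ε hε _ => ?_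
  have hε2 : (0:ℝ≥0∞) < (ε:ℝ≥0∞)/2 := by
    simp [ENNReal.div_pos_iff, hε.ne']
  have h1 : limsup f atTop < limsup f atTop + ε/2 := ENNReal.lt_add_right h.ne hε2.ne'
  have h2 : limsup g atTop < limsup g atTop + ε/2 := ENNReal.lt_add_right h'.ne hε2.ne'
  have e1 := eventually_lt_of_limsup_lt h1
  have e2 := eventually_lt_of_limsup_lt h2
  have : ∀ᶠ n in atTop, f n + g n ≤ limsup f atTop + limsup g atTop + ε := by
    filter_upwards [e1, e2] with n h1' h2'
    calc f n + g n ≤ (limsup f atTop + ε/2) + (limsup g atTop + ε/2) :=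
          add_le_add h1'.le h2'.le
    _ = limsup f atTop + limsup g atTop + ((ε:ℝ≥0∞)/2 + ε/2) := by ring
    _ = limsup f atTop + limsup g atTop + ε := by rw [ENNReal.add_halves]
  exact limsup_le_of_le (by isBoundedDefault) this

lemma ele_liminf_add (f g : ℕ → ℝ≥0∞) :
    liminf f atTop + liminf g atTop ≤ liminf (fun n => f n + g n) atTop := by
  rcases eq_zero_or_pos (liminf f atTop) with h | h
  · rw [h, zero_add]
    exact liminf_le_liminf (Eventually.of_forall fun n => le_add_self)
  rcases eq_zero_or_pos (liminf g atTop) with h' | h'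
  · rw [h', add_zero]
    exact liminf_le_liminf (Eventually.of_forall fun n => le_self_add)
  rcases eq_top_or_lt_top (liminf f atTop) with htop | hfin
  · have htot : liminf (fun n => f n + g n) atTop = ⊤ := by
      refine top_le_iff.mp ?_
      rw [← htop]
      exact liminf_le_liminf (Eventually.of_forall fun n => le_self_add)
    rw [htot]; exact le_top
  rcases eq_top_or_lt_top (liminf g atTop) with htop' | hfin'
  · have htot : liminf (fun n => f n + g n) atTop = ⊤ := by
      refine top_le_iff.mp ?_
      rw [← htop']
      exact liminf_le_liminf (Eventually.of_forall fun n => le_add_self)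
    rw [htot]; exact le_top
  refine ENNReal.le_of_forall_pos_le_add fun ε hε _ => ?_
  have hε2 : (0:ℝ≥0∞) < (ε:ℝ≥0∞)/2 := by simp [ENNReal.div_pos_iff, hε.ne']
  set a := liminf f atTop - ε/2 with ha
  set b := liminf g atTop - ε/2 with hb
  have hal : a < liminf f atTop := ENNReal.sub_lt_self hfin.ne h.ne' hε2.ne'
  have hbl : b < liminf g atTop := ENNReal.sub_lt_self hfin'.ne h'.ne' hε2.ne'
  have e1 := eventually_lt_of_lt_liminf hal
  have e2 := eventually_lt_of_lt_liminf hbl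
  have key : a + b ≤ liminf (fun n => f n + g n) atTop := by
    refine le_liminf_of_le (by isBoundedDefault) ?_
    filter_upwards [e1, e2] with n h1' h2'
    exact add_le_add h1'.le h2'.le
  have hfa : liminf f atTop ≤ a + ε/2 := by
    rw [ha]; exact le_tsub_add
  have hgb : liminf g atTop ≤ b + ε/2 := by
    rw [hb]; exact le_tsub_add
  calc liminf f atTop + liminf g atTop ≤ (a + ε/2) + (b + ε/2) := add_le_add hfa hgb
  _ = (a + b) + ((ε:ℝ≥0∞)/2 + ε/2) := by ring
  _ = (a + b) + ε := by rw [ENNReal.add_halves]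
  _ ≤ liminf (fun n => f n + g n) atTop + ε := add_le_add_left key _

lemma eliminf_add_const (g : ℕ → ℝ≥0∞) (c : ℝ≥0∞) :
    liminf (fun k => g k + c) atTop = liminf g atTop + c := by
  rw [liminf_eq_iSup_iInf_of_nat, liminf_eq_iSup_iInf_of_nat, ENNReal.iSup_add]
  congr 1
  ext n
  rw [ENNReal.iInf_add]
  congr 1
  ext i
  rw [ENNReal.iInf_add]

lemma elimsup_finset_sum_le {ι : Type*} (I : Finset ι) (f : ι → ℕ → ℝ≥0∞) :
    limsup (fun k => ∑ i ∈ I, f i k) atTop ≤ ∑ i ∈ I, limsup (f i) atTop := by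
  classical
  induction I using Finset.induction_on with
  | empty => simp
  | insert i I hiI ih =>
    simp only [Finset.sum_insert hiI]
    exact le_trans (elimsup_add_le _ _) (add_le_add_right ih _)

end ENNRealLimsup

section Core

variable {X : Type*} [MetricSpace X] [MeasurableSpace X] [BorelSpace X]

/-- The candidate limit set-function for an LP-Cauchy sequence of measures. -/
noncomputable def lamb (μs : ℕ → Measure X) (A : Set X) : ℝ≥0∞ :=
  ⨅ (δ : ℝ) (_ : 0 < δ), liminf (fun k => μs k (thickening δ A)) atTop

variable {μs : ℕ → Measure X}

lemma lamb_empty : lamb μs (∅ : Set X) = 0 := by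
  refine le_antisymm ?_ zero_le
  refine le_trans (iInf_le _ 1) ?_
  refine le_trans (iInf_le _ one_pos) ?_
  simp [thickening_empty]

lemma lamb_mono {A B : Set X} (h : A ⊆ B) : lamb μs A ≤ lamb μs B := by
  refine le_iInf fun δ => le_iInf fun hδ => ?_
  refine le_trans (iInf_le _ δ) (le_trans (iInf_le _ hδ) ?_)
  exact liminf_le_liminf (Eventually.of_forall fun k =>
    measure_mono (thickening_subset_of_subset δ h))

lemma lamb_le (A : Set X) {δ : ℝ} (hδ : 0 < δ) :
    lamb μs A ≤ liminf (fun k => μs k (thickening δ A)) atTop :=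
  le_trans (iInf_le _ δ) (iInf_le _ hδ)

lemma lamb_le_one (hP : ∀ k, IsProbabilityMeasure (μs k)) (A : Set X) : lamb μs A ≤ 1 := by
  refine le_trans (lamb_le A one_pos) ?_
  have : ∀ k, μs k (thickening 1 A) ≤ 1 := fun k =>
    le_trans (measure_mono (subset_univ _)) (le_of_eq (hP k).measure_univ)
  calc liminf (fun k => μs k (thickening 1 A)) atTop ≤ liminf (fun _ => (1:ℝ≥0∞)) atTop :=
        liminf_le_liminf (Eventually.of_forall this)
  _ = 1 := liminf_const 1

/-- Superadditivity of `lamb` on metric-separated sets. -/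
lemma lamb_superadd {S T : Set X} (h : AreSeparated S T) :
    lamb μs S + lamb μs T ≤ lamb μs (S ∪ T) := by
  obtain ⟨r, hr0, hsep⟩ := h
  set c : ℝ := (min r 1).toReal with hc
  have hmin_pos : (0:ℝ≥0∞) < min r 1 := lt_min (pos_iff_ne_zero.mpr hr0) one_pos
  have hmin_ne : min r 1 ≠ 0 := hmin_pos.ne'
  have hmin_lt : min r 1 < ⊤ := lt_of_le_of_lt (min_le_right _ _) (by norm_num)
  have hc_pos : 0 < c := ENNReal.toReal_pos hmin_ne hmin_lt.ne
  refine le_iInf fun δ => le_iInf fun hδ => ?_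
  set δ' : ℝ := min δ (c/4) with hδ'
  have hδ'_pos : 0 < δ' := lt_min hδ (by linarith)
  have hδ'_le : δ' ≤ c/4 := min_le_right _ _
  -- thickening δ' S and thickening δ' T are disjoint
  have hdisj : Disjoint (thickening δ' S) (thickening δ' T) := by
    rw [Set.disjoint_left]
    rintro z hzS hzT
    obtain ⟨s, hs, hzs⟩ := mem_thickening_iff.mp hzS
    obtain ⟨t, ht, hzt⟩ := mem_thickening_iff.mp hzT
    have h1 : min r 1 ≤ edist s t := le_trans (min_le_left _ _) (hsep s hs t ht)
    have h2 : edist s t ≤ ENNReal.ofReal (dist s z) + ENNReal.ofReal (dist z t) := by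
      rw [← edist_dist, ← edist_dist]
      exact edist_triangle _ _ _
    have h3 : ENNReal.ofReal (dist s z) + ENNReal.ofReal (dist z t)
        < ENNReal.ofReal c := by
      rw [← ENNReal.ofReal_add dist_nonneg dist_nonneg]
      refine ENNReal.ofReal_lt_ofReal_iff hc_pos |>.mpr ?_
      rw [dist_comm s z]
      calc dist z s + dist z t < δ' + δ' := add_lt_add hzs hzt
      _ ≤ c/4 + c/4 := add_le_add hδ'_le hδ'_le
      _ < c := by linarith
    have h4 : ENNReal.ofReal c = min r 1 := by
      rw [hc, ENNReal.ofReal_toReal hmin_lt.ne]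
    exact absurd (lt_of_le_of_lt (h1.trans h2) (h3.trans_eq h4)) (lt_irrefl _)
  have hsub : thickening δ' (S ∪ T) ⊆ thickening δ (S ∪ T) :=
    thickening_mono (min_le_left _ _) _
  calc lamb μs S + lamb μs T
      ≤ liminf (fun k => μs k (thickening δ' S)) atTop
        + liminf (fun k => μs k (thickening δ' T)) atTop :=
        add_le_add (lamb_le S hδ'_pos) (lamb_le T hδ'_pos)
  _ ≤ liminf (fun k => μs k (thickening δ' S) + μs k (thickening δ' T)) atTop :=
        ele_liminf_add _ _
  _ = liminf (fun k => μs k (thickening δ' (S ∪ T))) atTop := by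
        apply congrArg (fun u => liminf u atTop)
        funext k
        rw [thickening_union]
        exact (measure_union' hdisj isOpen_thickening.measurableSet).symm
  _ ≤ liminf (fun k => μs k (thickening δ (S ∪ T))) atTop :=
        liminf_le_liminf (Eventually.of_forall fun k => measure_mono hsub)

/-- The outer measure associated with `lamb`. -/
noncomputable def lambOuter (μs : ℕ → Measure X) : OuterMeasure X :=
  OuterMeasure.ofFunction (lamb μs) lamb_empty

lemma lambOuter_le_tsum {A : Set X} (C : ℕ → Set X) (h : A ⊆ ⋃ n, C n) :
    lambOuter μs A ≤ ∑' n, lamb μs (C n) := by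
  rw [lambOuter, OuterMeasure.ofFunction_apply]
  exact iInf₂_le C h

lemma lambOuter_le {A : Set X} : lambOuter μs A ≤ lamb μs A :=
  OuterMeasure.ofFunction_le A

lemma lambOuter_isMetric : (lambOuter μs).IsMetric := by
  intro S T hST
  refine le_antisymm (measure_union_le S T) ?_
  obtain ⟨r, hr0, hsep⟩ := hST
  set c : ℝ := (min r 1).toReal with hc
  have hmin_pos : (0:ℝ≥0∞) < min r 1 := lt_min (pos_iff_ne_zero.mpr hr0) one_pos
  have hmin_lt : min r 1 < ⊤ := lt_of_le_of_lt (min_le_right _ _) (by norm_num)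
  have hc_pos : 0 < c := ENNReal.toReal_pos hmin_pos.ne' hmin_lt.ne
  have hρ : 0 < c/4 := by linarith
  set US := thickening (c/4) S with hUS
  set UT := thickening (c/4) T with hUT
  have hsep' : AreSeparated US UT := by
    refine ⟨ENNReal.ofReal (c/4), (ENNReal.ofReal_pos.mpr hρ).ne', ?_⟩
    intro a ha b hb
    by_contra hlt
    push_neg at hlt
    obtain ⟨s, hs, has⟩ := mem_thickening_iff.mp ha
    obtain ⟨t, ht, hbt⟩ := mem_thickening_iff.mp hb
    have hab : dist a b < c/4 := by
      have := hlt.trans_le (le_of_eq rfl)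
      rw [edist_dist] at this
      exact (ENNReal.ofReal_lt_ofReal_iff hρ).mp this
    have hst : dist s t < c := by
      calc dist s t ≤ dist s a + dist a b + dist b t := dist_triangle4 s a b t
      _ < c/4 + c/4 + c/4 := by
          rw [dist_comm s a]
          exact add_lt_add (add_lt_add has hab) hbt
      _ < c := by linarith
    have h1 : min r 1 ≤ edist s t := le_trans (min_le_left _ _) (hsep s hs t ht)
    rw [edist_dist] at h1
    have h2 : ENNReal.ofReal (dist s t) < ENNReal.ofReal c :=
      (ENNReal.ofReal_lt_ofReal_iff hc_pos).mpr hst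
    have h3 : ENNReal.ofReal c = min r 1 := by rw [hc, ENNReal.ofReal_toReal hmin_lt.ne]
    exact absurd (h1.trans_lt (h2.trans_eq h3)) (lt_irrefl _)
  rw [lambOuter, OuterMeasure.ofFunction_apply]
  refine le_iInf fun C => le_iInf fun hCov => ?_
  have hSsub : S ⊆ ⋃ n, C n ∩ US := by
    intro x hx
    obtain ⟨n, hn⟩ := mem_iUnion.mp (hCov (Or.inl hx))
    exact mem_iUnion.mpr ⟨n, hn, self_subset_thickening hρ S hx⟩
  have hTsub : T ⊆ ⋃ n, C n ∩ UT := by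
    intro x hx
    obtain ⟨n, hn⟩ := mem_iUnion.mp (hCov (Or.inr hx))
    exact mem_iUnion.mpr ⟨n, hn, self_subset_thickening hρ T hx⟩
  have key : ∀ n, lamb μs (C n ∩ US) + lamb μs (C n ∩ UT) ≤ lamb μs (C n) := by
    intro n
    have hsep'' : AreSeparated (C n ∩ US) (C n ∩ UT) := by
      obtain ⟨r', hr', hsep'⟩ := hsep'
      exact ⟨r', hr', fun a ha b hb => hsep' a ha.2 b hb.2⟩
    refine le_trans (lamb_superadd hsep'') (lamb_mono ?_)
    exact union_subset inter_subset_left inter_subset_left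
  calc (lambOuter μs) S + (lambOuter μs) T
      ≤ (∑' n, lamb μs (C n ∩ US)) + ∑' n, lamb μs (C n ∩ UT) :=
        add_le_add (lambOuter_le_tsum _ hSsub) (lambOuter_le_tsum _ hTsub)
  _ = ∑' n, (lamb μs (C n ∩ US) + lamb μs (C n ∩ UT)) := ENNReal.tsum_add.symm
  _ ≤ ∑' n, lamb μs (C n) := ENNReal.tsum_le_tsum key

/-- The Borel measure obtained from the outer measure `lambOuter`. -/
noncomputable def limMeasure (μs : ℕ → Measure X) : Measure X :=
  (lambOuter μs).toMeasure
    (le_of_eq_of_le (BorelSpace.measurable_eq (α := X))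
      (lambOuter_isMetric (μs := μs)).borel_le_caratheodory)

lemma limMeasure_apply {B : Set X} (hB : MeasurableSet B) :
    limMeasure μs B = lambOuter μs B :=
  toMeasure_apply _ _ hB

section Cauchy

variable (hP : ∀ k, IsProbabilityMeasure (μs k))
variable (hC : ∀ ε : ℝ, 0 < ε → ∃ K, ∀ k l, K ≤ k → K ≤ l →
  levyProkhorovEDist (μs k) (μs l) < ENNReal.ofReal ε)

include hC in
lemma bridge {S : Set X} (hS : MeasurableSet S) {η : ℝ} (hη : 0 < η) :
    limsup (fun k => μs k S) atTop
      ≤ liminf (fun k => μs k (thickening η S)) atTop + ENNReal.ofReal η := by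
  obtain ⟨K, hK⟩ := hC η hη
  have main : ∀ l, K ≤ l →
      limsup (fun k => μs k S) atTop ≤ μs l (thickening η S) + ENNReal.ofReal η := by
    intro l hl
    refine limsup_le_of_le (by isBoundedDefault) ?_
    filter_upwards [eventually_ge_atTop K] with k hk
    have h := left_measure_le_of_levyProkhorovEDist_lt (hK k l hk hl) hS
    rwa [ENNReal.toReal_ofReal hη.le] at h
  have h2 : limsup (fun k => μs k S) atTop
      ≤ liminf (fun l => μs l (thickening η S) + ENNReal.ofReal η) atTop :=
    le_liminf_of_le (by isBoundedDefault)
      (by filter_upwards [eventually_ge_atTop K] with l hl using main l hl)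
  rwa [eliminf_add_const] at h2

variable [TopologicalSpace.SeparableSpace X] [CompleteSpace X] [Nonempty X]

include hP hC in
lemma tight_step {r δ : ℝ} (hr : 0 < r) (hδ : 0 < δ) :
    ∃ J : ℕ, ∀ k, 1 ≤ ENNReal.ofReal δ
      + μs k (⋃ j ∈ Finset.range J, ball (TopologicalSpace.denseSeq X j) (2*r)) := by
  classical
  set q := TopologicalSpace.denseSeq X
  set e : ℝ := min (δ/2) r with he_def
  have he : 0 < e := lt_min (by linarith) hr
  obtain ⟨K₀, hK₀⟩ := hC e he
  set U : ℕ → Set X := fun J => ⋃ j ∈ Finset.range J, ball (q j) r with hU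
  have hUmono : Monotone U := by
    intro a b hab x hx
    obtain ⟨j, hj, hxj⟩ := mem_iUnion₂.mp hx
    exact mem_iUnion₂.mpr ⟨j, Finset.mem_range.mpr (by
      have := Finset.mem_range.mp hj; omega), hxj⟩
  have hUuniv : (⋃ J, U J) = univ := by
    refine eq_univ_of_forall fun x => ?_
    obtain ⟨j, hj⟩ := Metric.denseRange_iff.mp (TopologicalSpace.denseRange_denseSeq X) x r hr
    refine mem_iUnion.mpr ⟨j+1, ?_⟩
    refine mem_iUnion₂.mpr ⟨j, Finset.mem_range.mpr (by omega), ?_⟩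
    exact mem_ball.mpr hj
  have hlim : ∀ k, Tendsto (fun J => μs k (U J)) atTop (𝓝 1) := by
    intro k
    have h := tendsto_measure_iUnion_atTop (μ := μs k) hUmono
    rw [hUuniv] at h
    rw [(hP k).measure_univ] at h
    exact h
  have hev : ∀ᶠ J in atTop, ∀ k ∈ Finset.range (K₀+1),
      1 < ENNReal.ofReal (δ/2) + μs k (U J) := by
    rw [Filter.eventually_all_finset]
    intro k _
    refine (hlim k).eventually (p := fun m => 1 < ENNReal.ofReal (δ/2) + m) ?_
    have hopen : IsOpen {m : ℝ≥0∞ | 1 < ENNReal.ofReal (δ/2) + m} :=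
      isOpen_lt continuous_const (continuous_add_left _)
    refine hopen.mem_nhds ?_
    show (1:ℝ≥0∞) < ENNReal.ofReal (δ/2) + 1
    rw [add_comm]
    exact ENNReal.lt_add_right ENNReal.one_ne_top (ENNReal.ofReal_pos.mpr (by linarith)).ne'
  obtain ⟨J, hJ⟩ := hev.exists
  refine ⟨J, fun k => ?_⟩
  set V : Set X := ⋃ j ∈ Finset.range J, ball (q j) (2*r) with hV
  have hUV : U J ⊆ V := by
    refine Set.iUnion₂_mono fun j _ => ?_
    exact ball_subset_ball (by linarith)
  have hthick : thickening e (U J) ⊆ V := by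
    intro z hz
    obtain ⟨y, hy, hzy⟩ := mem_thickening_iff.mp hz
    obtain ⟨j, hj, hyj⟩ := mem_iUnion₂.mp hy
    refine mem_iUnion₂.mpr ⟨j, hj, ?_⟩
    rw [mem_ball] at hyj ⊢
    have : dist z (q j) ≤ dist z y + dist y (q j) := dist_triangle _ _ _
    have he_r : e ≤ r := min_le_right _ _
    nlinarith [dist_nonneg (x := z) (y := y)]
  rcases le_or_gt k K₀ with hk | hk
  · have h := hJ k (Finset.mem_range.mpr (by omega))
    calc (1:ℝ≥0∞) ≤ ENNReal.ofReal (δ/2) + μs k (U J) := h.le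
    _ ≤ ENNReal.ofReal δ + μs k V :=
        add_le_add (ENNReal.ofReal_le_ofReal (by linarith)) (measure_mono hUV)
  · have h0 := (hJ K₀ (Finset.mem_range.mpr (by omega))).le
    have h1 : μs K₀ (U J) ≤ μs k (thickening e (U J)) + ENNReal.ofReal e := by
      have hUmble : MeasurableSet (U J) := by
        rw [hU]
        exact (isOpen_biUnion fun j _ => isOpen_ball).measurableSet
      have h := left_measure_le_of_levyProkhorovEDist_lt (hK₀ K₀ k le_rfl hk.le) hUmble
      rwa [ENNReal.toReal_ofReal he.le] at h
    calc (1:ℝ≥0∞) ≤ ENNReal.ofReal (δ/2) + μs K₀ (U J) := h0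
    _ ≤ ENNReal.ofReal (δ/2) + (μs k (thickening e (U J)) + ENNReal.ofReal e) :=
        add_le_add_right h1 _
    _ ≤ ENNReal.ofReal (δ/2) + (μs k V + ENNReal.ofReal (δ/2)) := by
        refine add_le_add_right (add_le_add (measure_mono hthick)
          (ENNReal.ofReal_le_ofReal (min_le_left _ _))) _
    _ = ENNReal.ofReal (δ/2) + ENNReal.ofReal (δ/2) + μs k V := by ring
    _ = ENNReal.ofReal δ + μs k V := by
        rw [← ENNReal.ofReal_add (by linarith) (by linarith)]
        norm_num

lemma tsum_geo {ε : ℝ} (hε : 0 ≤ ε) :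
    ∑' m : ℕ, ENNReal.ofReal (ε * (2⁻¹)^(m+1)) = ENNReal.ofReal ε := by
  have heq : ∀ m : ℕ, ENNReal.ofReal (ε * (2⁻¹)^(m+1))
      = ENNReal.ofReal ε * (2⁻¹ : ℝ≥0∞)^(m+1) := by
    intro m
    rw [ENNReal.ofReal_mul hε, ENNReal.ofReal_pow (by norm_num : (0:ℝ) ≤ 2⁻¹)]
    congr 2
    rw [ENNReal.ofReal_inv_of_pos (by norm_num : (0:ℝ) < 2)]
    norm_num
  have hsum : ∑' m : ℕ, (2⁻¹ : ℝ≥0∞)^(m+1) = 1 := by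
    have h1 : ∑' m : ℕ, (2⁻¹ : ℝ≥0∞)^(m+1) = 2⁻¹ * ∑' m : ℕ, (2⁻¹ : ℝ≥0∞)^m := by
      rw [← ENNReal.tsum_mul_left]
      refine tsum_congr fun m => ?_
      rw [pow_succ, mul_comm]
    rw [h1, ENNReal.tsum_geometric, ENNReal.one_sub_inv_two, inv_inv]
    exact ENNReal.inv_mul_cancel (by norm_num) (by norm_num)
  calc ∑' m : ℕ, ENNReal.ofReal (ε * (2⁻¹)^(m+1))
      = ∑' m : ℕ, ENNReal.ofReal ε * (2⁻¹ : ℝ≥0∞)^(m+1) := tsum_congr heq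
  _ = ENNReal.ofReal ε * ∑' m : ℕ, (2⁻¹ : ℝ≥0∞)^(m+1) := ENNReal.tsum_mul_left
  _ = ENNReal.ofReal ε := by rw [hsum, mul_one]

include hP hC in
lemma tight {ε : ℝ} (hε : 0 < ε) :
    ∃ C : Set X, IsCompact C ∧ ∀ k, μs k Cᶜ ≤ ENNReal.ofReal ε := by
  classical
  set q := TopologicalSpace.denseSeq X with hq
  have hpos : ∀ m : ℕ, (0:ℝ) < 1/(m+1) := fun m => by positivity
  have hδpos : ∀ m : ℕ, (0:ℝ) < ε * (2⁻¹)^(m+1) := fun m => by positivity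
  choose Js hJs using fun m : ℕ => tight_step (μs := μs) hP hC (hpos m) (hδpos m)
  set W : ℕ → Set X :=
    fun m => ⋃ j ∈ Finset.range (Js m), closedBall (q j) (2*(1/(m+1))) with hW
  set V : ℕ → Set X :=
    fun m => ⋃ j ∈ Finset.range (Js m), ball (q j) (2*(1/(m+1))) with hVdef
  have hVW : ∀ m, V m ⊆ W m := fun m => iUnion₂_mono fun j _ => ball_subset_closedBall
  refine ⟨⋂ m, W m, ?_, ?_⟩
  · refine TotallyBounded.isCompact_of_isClosed ?_ ?_
    · rw [totallyBounded_iff]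
      intro η hη
      obtain ⟨m, hm⟩ := exists_nat_gt (2/η)
      refine ⟨q '' (Finset.range (Js m) : Set ℕ),
        ((Finset.range (Js m)).finite_toSet).image q, ?_⟩
      intro x hx
      have hxW := mem_iInter.mp hx m
      obtain ⟨j, hj, hxj⟩ := mem_iUnion₂.mp hxW
      refine mem_iUnion₂.mpr ⟨q j, mem_image_of_mem q hj, ?_⟩
      rw [mem_ball]
      have h1 : dist x (q j) ≤ 2*(1/(m+1)) := mem_closedBall.mp hxj
      have h2 : 2*(1/(m+1:ℝ)) < η := by
        rw [div_lt_iff₀ hη] at hm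
        have hm1 : (2:ℝ) < η * (m+1) := by
          have : η * m ≤ η * (m+1) := by nlinarith
          linarith
        rw [mul_one_div, div_lt_iff₀ (by positivity)]
        linarith
      linarith
    · exact isClosed_iInter fun m =>
        ((Finset.range (Js m)).finite_toSet).isClosed_biUnion fun j _ => isClosed_closedBall
  · intro k
    have hsub : (⋂ m, W m)ᶜ ⊆ ⋃ m, (V m)ᶜ := by
      rw [compl_iInter]
      exact iUnion_mono fun m => compl_subset_compl.mpr (hVW m)
    refine le_trans (measure_mono hsub) (le_trans (measure_iUnion_le _) ?_)
    have hVm : ∀ m, μs k (V m)ᶜ ≤ ENNReal.ofReal (ε * (2⁻¹)^(m+1)) := by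
      intro m
      have h1 := hJs m k
      have hVmble : MeasurableSet (V m) := by
        rw [hVdef]
        exact (isOpen_biUnion fun j _ => isOpen_ball).measurableSet
      have h2 : μs k (V m)ᶜ + μs k (V m)
          ≤ ENNReal.ofReal (ε*(2⁻¹)^(m+1)) + μs k (V m) := by
        rw [add_comm (μs k (V m)ᶜ), measure_add_measure_compl hVmble, (hP k).measure_univ]
        exact h1
      have h3 := (ENNReal.add_le_add_iff_right (measure_ne_top (μs k) (V m))).mp h2
      exact h3
    refine le_trans (ENNReal.tsum_le_tsum hVm) (le_of_eq (tsum_geo hε.le))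

include hP hC in
lemma mass_one : limMeasure μs univ = 1 := by
  rw [limMeasure_apply MeasurableSet.univ]
  refine le_antisymm (le_trans lambOuter_le (lamb_le_one hP _)) ?_
  rw [lambOuter, OuterMeasure.ofFunction_apply]
  refine le_iInf fun A => le_iInf fun hA => ?_
  refine ENNReal.le_of_forall_pos_le_add fun η hη hfin => ?_
  set ε : ℝ := (η:ℝ)/4 with hε_def
  have hη' : (0:ℝ) < (η:ℝ) := hη
  have hε : 0 < ε := by positivity
  -- choose approximating thickening radii
  have hchoice : ∀ n : ℕ, ∃ δ : ℝ, 0 < δ ∧ δ ≤ ε * (2⁻¹)^(n+1) ∧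
      liminf (fun k => μs k (thickening δ (A n))) atTop
        ≤ lamb μs (A n) + ENNReal.ofReal (ε * (2⁻¹)^(n+1)) := by
    intro n
    have hen : (0:ℝ) < ε * (2⁻¹)^(n+1) := by positivity
    have hlt : lamb μs (A n) < lamb μs (A n) + ENNReal.ofReal (ε * (2⁻¹)^(n+1)) :=
      ENNReal.lt_add_right (lt_of_le_of_lt (lamb_le_one hP _) ENNReal.one_lt_top).ne
        (ENNReal.ofReal_pos.mpr hen).ne'
    conv_lhs at hlt => rw [lamb]
    obtain ⟨δ', hδ'⟩ := iInf_lt_iff.mp hlt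
    obtain ⟨hδ'pos, hlt'⟩ := iInf_lt_iff.mp hδ'
    refine ⟨min δ' (ε * (2⁻¹)^(n+1)), lt_min hδ'pos hen, min_le_right _ _, ?_⟩
    refine le_trans (liminf_le_liminf (Eventually.of_forall fun k =>
      measure_mono (thickening_mono (min_le_left _ _) _))) hlt'.le
  choose δf hδf0 hδfle hδfbound using hchoice
  set O : ℕ → Set X := fun n => thickening (δf n / 2) (A n) with hO
  have hOopen : ∀ n, IsOpen (O n) := fun n => isOpen_thickening
  have hcoverO : univ ⊆ ⋃ n, O n := by
    intro x _
    obtain ⟨n, hn⟩ := mem_iUnion.mp (hA (mem_univ x))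
    exact mem_iUnion.mpr ⟨n, self_subset_thickening (by linarith [hδf0 n]) _ hn⟩
  obtain ⟨C, hCcomp, hCbound⟩ := tight hP hC hε
  obtain ⟨I, hI⟩ := hCcomp.elim_finite_subcover O hOopen ((subset_univ C).trans hcoverO)
  have hk1 : ∀ k, (1:ℝ≥0∞) ≤ ENNReal.ofReal ε + ∑ i ∈ I, μs k (O i) := by
    intro k
    calc (1:ℝ≥0∞) = μs k univ := ((hP k).measure_univ).symm
    _ ≤ μs k (Cᶜ ∪ ⋃ i ∈ I, O i) := measure_mono (by
          intro x _
          by_cases hx : x ∈ C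
          · exact Or.inr (hI hx)
          · exact Or.inl hx)
    _ ≤ μs k Cᶜ + μs k (⋃ i ∈ I, O i) := measure_union_le _ _
    _ ≤ ENNReal.ofReal ε + ∑ i ∈ I, μs k (O i) :=
        add_le_add (hCbound k) (measure_biUnion_finset_le _ _)
  have h2 : (1:ℝ≥0∞) ≤ ENNReal.ofReal ε + ∑ i ∈ I, limsup (fun k => μs k (O i)) atTop := by
    have ha : (1:ℝ≥0∞) = limsup (fun _ : ℕ => (1:ℝ≥0∞)) atTop := (limsup_const _).symm
    rw [ha]
    refine le_trans (limsup_le_limsup (Eventually.of_forall hk1)) ?_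
    refine le_trans (elimsup_add_le (fun _ => ENNReal.ofReal ε)
      (fun k => ∑ i ∈ I, μs k (O i))) ?_
    rw [limsup_const]
    exact add_le_add_right (elimsup_finset_sum_le I fun i k => μs k (O i)) _
  have h3 : ∀ n, limsup (fun k => μs k (O n)) atTop
      ≤ lamb μs (A n)
        + (ENNReal.ofReal (ε*(2⁻¹)^(n+1)) + ENNReal.ofReal (ε*(2⁻¹)^(n+1))) := by
    intro n
    have hhalf : (0:ℝ) < δf n / 2 := by linarith [hδf0 n]
    have hb := bridge (μs := μs) hC (hOopen n).measurableSet hhalf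
    refine le_trans hb ?_
    have hsub2 : thickening (δf n/2) (O n) ⊆ thickening (δf n) (A n) := by
      refine subset_trans (thickening_thickening_subset _ _ _) ?_
      rw [add_halves]
    have hmono2 : liminf (fun k => μs k (thickening (δf n/2) (O n))) atTop
        ≤ liminf (fun k => μs k (thickening (δf n) (A n))) atTop :=
      liminf_le_liminf (Eventually.of_forall fun k => measure_mono hsub2)
    have hofle : ENNReal.ofReal (δf n/2) ≤ ENNReal.ofReal (ε*(2⁻¹)^(n+1)) :=
      ENNReal.ofReal_le_ofReal (by linarith [hδfle n, hδf0 n])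
    calc liminf (fun k => μs k (thickening (δf n/2) (O n))) atTop + ENNReal.ofReal (δf n/2)
        ≤ liminf (fun k => μs k (thickening (δf n) (A n))) atTop
          + ENNReal.ofReal (ε*(2⁻¹)^(n+1)) := add_le_add hmono2 hofle
    _ ≤ (lamb μs (A n) + ENNReal.ofReal (ε*(2⁻¹)^(n+1)))
          + ENNReal.ofReal (ε*(2⁻¹)^(n+1)) := add_le_add_left (hδfbound n) _
    _ = lamb μs (A n)
          + (ENNReal.ofReal (ε*(2⁻¹)^(n+1)) + ENNReal.ofReal (ε*(2⁻¹)^(n+1))) := by ring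
  have h4 : (1:ℝ≥0∞) ≤ ENNReal.ofReal ε + ((∑' n, lamb μs (A n))
      + (ENNReal.ofReal ε + ENNReal.ofReal ε)) := by
    refine le_trans h2 (add_le_add_right ?_ _)
    calc ∑ i ∈ I, limsup (fun k => μs k (O i)) atTop
        ≤ ∑ i ∈ I, (lamb μs (A i)
          + (ENNReal.ofReal (ε*(2⁻¹)^(i+1)) + ENNReal.ofReal (ε*(2⁻¹)^(i+1)))) :=
          Finset.sum_le_sum fun i _ => h3 i
    _ = ∑ i ∈ I, lamb μs (A i)
          + (∑ i ∈ I, ENNReal.ofReal (ε*(2⁻¹)^(i+1))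
            + ∑ i ∈ I, ENNReal.ofReal (ε*(2⁻¹)^(i+1))) := by
          rw [Finset.sum_add_distrib, Finset.sum_add_distrib]
    _ ≤ (∑' n, lamb μs (A n)) + (ENNReal.ofReal ε + ENNReal.ofReal ε) := by
          refine add_le_add (ENNReal.sum_le_tsum I) (add_le_add ?_ ?_) <;>
            exact le_trans (ENNReal.sum_le_tsum I) (le_of_eq (tsum_geo hε.le))
  refine le_trans h4 ?_
  have hcoll : ENNReal.ofReal ε + ENNReal.ofReal ε + ENNReal.ofReal ε ≤ (η : ℝ≥0∞) := by
    rw [← ENNReal.ofReal_add hε.le hε.le, ← ENNReal.ofReal_add (by linarith) hε.le]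
    calc ENNReal.ofReal (ε + ε + ε) ≤ ENNReal.ofReal (η:ℝ) :=
          ENNReal.ofReal_le_ofReal (by rw [hε_def]; linarith)
    _ = (η : ℝ≥0∞) := ENNReal.ofReal_coe_nnreal
  calc ENNReal.ofReal ε + ((∑' n, lamb μs (A n)) + (ENNReal.ofReal ε + ENNReal.ofReal ε))
      = (∑' n, lamb μs (A n)) + (ENNReal.ofReal ε + ENNReal.ofReal ε + ENNReal.ofReal ε) := by
        ring
  _ ≤ (∑' n, lamb μs (A n)) + (η : ℝ≥0∞) := add_le_add_right hcoll _

include hP hC in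
lemma isProbability_limMeasure : IsProbabilityMeasure (limMeasure μs) :=
  ⟨mass_one hP hC⟩

include hP hC in
lemma converge {ε : ℝ} (hε : 0 < ε) :
    ∃ K, ∀ k, K ≤ k →
      levyProkhorovEDist (μs k) (limMeasure μs) ≤ ENNReal.ofReal (2*ε) := by
  obtain ⟨K, hK⟩ := hC ε hε
  have hprob := isProbability_limMeasure hP hC
  refine ⟨K, fun k hk => ?_⟩
  refine levyProkhorovEDist_le_of_forall _ _ _ ?_
  intro ε' B hε' hε'top hB
  set t := ε'.toReal with ht
  have ht2 : 2*ε < t :=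
    (ENNReal.ofReal_lt_iff_lt_toReal (by positivity) hε'top.ne).mp hε'
  have hofε_le : ENNReal.ofReal ε ≤ ε' := by
    calc ENNReal.ofReal ε ≤ ENNReal.ofReal t := ENNReal.ofReal_le_ofReal (by linarith)
    _ = ε' := ENNReal.ofReal_toReal hε'top.ne
  constructor
  · -- μs k B ≤ limMeasure (thickening t B) + ε'
    set W := thickening t B with hWdef
    have hWopen : IsOpen W := isOpen_thickening
    have claim : μs k B + limMeasure μs Wᶜ ≤ 1 + ENNReal.ofReal ε := by
      have hsubW : thickening ε Wᶜ ⊆ (thickening (t-ε) B)ᶜ := by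
        intro z hz
        obtain ⟨w, hw, hzw⟩ := mem_thickening_iff.mp hz
        intro hzB
        obtain ⟨b, hb, hzb⟩ := mem_thickening_iff.mp hzB
        apply hw
        refine mem_thickening_iff.mpr ⟨b, hb, ?_⟩
        calc dist w b ≤ dist w z + dist z b := dist_triangle _ _ _
        _ < ε + (t - ε) := add_lt_add (by rw [dist_comm]; exact hzw) hzb
        _ = t := by ring
      have h5 : limMeasure μs Wᶜ
          ≤ liminf (fun l => μs l ((thickening (t-ε) B)ᶜ)) atTop := by
        rw [limMeasure_apply hWopen.measurableSet.compl]
        refine le_trans lambOuter_le (le_trans (lamb_le _ hε) ?_)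
        exact liminf_le_liminf (Eventually.of_forall fun l => measure_mono hsubW)
      have h6 : ∀ l, K ≤ l →
          μs l ((thickening (t-ε) B)ᶜ) + μs k B ≤ 1 + ENNReal.ofReal ε := by
        intro l hl
        have h7 : μs k B ≤ μs l (thickening ε B) + ENNReal.ofReal ε := by
          have h := left_measure_le_of_levyProkhorovEDist_lt (hK k l hk hl) hB
          rwa [ENNReal.toReal_ofReal hε.le] at h
        have h8 : thickening ε B ⊆ thickening (t-ε) B := thickening_mono (by linarith) _
        calc μs l ((thickening (t-ε) B)ᶜ) + μs k B
            ≤ μs l ((thickening (t-ε) B)ᶜ)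
              + (μs l (thickening (t-ε) B) + ENNReal.ofReal ε) :=
              add_le_add_right (h7.trans (add_le_add_left (measure_mono h8) _)) _
        _ = (μs l (thickening (t-ε) B) + μs l ((thickening (t-ε) B)ᶜ))
              + ENNReal.ofReal ε := by ring
        _ = 1 + ENNReal.ofReal ε := by
            rw [measure_add_measure_compl isOpen_thickening.measurableSet,
              (hP l).measure_univ]
      calc μs k B + limMeasure μs Wᶜ
          ≤ μs k B + liminf (fun l => μs l ((thickening (t-ε) B)ᶜ)) atTop :=
            add_le_add_right h5 _
      _ = liminf (fun l => μs l ((thickening (t-ε) B)ᶜ) + μs k B) atTop := by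
            rw [add_comm, eliminf_add_const]
      _ ≤ liminf (fun _ : ℕ => 1 + ENNReal.ofReal ε) atTop :=
            liminf_le_liminf (by
              filter_upwards [eventually_ge_atTop K] with l hl using h6 l hl)
      _ = 1 + ENNReal.ofReal ε := liminf_const _
    have hfin : limMeasure μs Wᶜ ≠ ⊤ := measure_ne_top _ _
    have hfinal : μs k B + limMeasure μs Wᶜ
        ≤ (limMeasure μs W + ε') + limMeasure μs Wᶜ := by
      refine le_trans claim ?_
      have hmass : (1:ℝ≥0∞) = limMeasure μs W + limMeasure μs Wᶜ := by
        rw [measure_add_measure_compl hWopen.measurableSet]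
        exact (hprob.measure_univ).symm
      calc (1:ℝ≥0∞) + ENNReal.ofReal ε
          = (limMeasure μs W + limMeasure μs Wᶜ) + ENNReal.ofReal ε := by rw [← hmass]
      _ = (limMeasure μs W + ENNReal.ofReal ε) + limMeasure μs Wᶜ := by ring
      _ ≤ (limMeasure μs W + ε') + limMeasure μs Wᶜ :=
            add_le_add_left (add_le_add_right hofε_le _) _
    exact (ENNReal.add_le_add_iff_right hfin).mp hfinal
  · -- limMeasure B ≤ μs k (thickening t B) + ε'
    have h5 : limMeasure μs B ≤ liminf (fun l => μs l (thickening ε B)) atTop := by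
      rw [limMeasure_apply hB]
      exact le_trans lambOuter_le (lamb_le _ hε)
    have h6 : ∀ l, K ≤ l →
        μs l (thickening ε B) ≤ μs k (thickening t B) + ENNReal.ofReal ε := by
      intro l hl
      have h := left_measure_le_of_levyProkhorovEDist_lt (hK l k hl hk)
        (B := thickening ε B) isOpen_thickening.measurableSet
      rw [ENNReal.toReal_ofReal hε.le] at h
      refine h.trans (add_le_add_left (measure_mono ?_) _)
      exact subset_trans (thickening_thickening_subset _ _ _)
        (thickening_mono (by linarith) _)
    calc limMeasure μs B ≤ liminf (fun l => μs l (thickening ε B)) atTop := h5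
    _ ≤ liminf (fun _ : ℕ => μs k (thickening t B) + ENNReal.ofReal ε) atTop :=
        liminf_le_liminf (by
          filter_upwards [eventually_ge_atTop K] with l hl using h6 l hl)
    _ = μs k (thickening t B) + ENNReal.ofReal ε := liminf_const _
    _ ≤ μs k (thickening t B) + ε' := add_le_add_right hofε_le _

include hP hC in
theorem exists_LP_limit :
    ∃ ν : Measure X, IsProbabilityMeasure ν ∧
      Tendsto (fun k => levyProkhorovEDist (μs k) ν) atTop (𝓝 0) := by
  refine ⟨limMeasure μs, isProbability_limMeasure hP hC, ?_⟩
  rw [ENNReal.tendsto_nhds_zero]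
  intro η hη
  have hex : ∃ ε : ℝ, 0 < ε ∧ ENNReal.ofReal (2*ε) ≤ η := by
    rcases eq_top_or_lt_top η with rfl | hfin
    · exact ⟨1, one_pos, le_top⟩
    · have hηR : 0 < η.toReal := ENNReal.toReal_pos hη.ne' hfin.ne
      refine ⟨η.toReal/2, by positivity, ?_⟩
      rw [(by ring : 2*(η.toReal/2) = η.toReal), ENNReal.ofReal_toReal hfin.ne]
  obtain ⟨ε, hε, hεη⟩ := hex
  obtain ⟨K, hK⟩ := converge hP hC hε
  filter_upwards [eventually_ge_atTop K] with k hk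
  exact le_trans (hK k hk) hεη

end Cauchy

end Core

section Link

open scoped Classical

variable {X : Type*} [MetricSpace X] [MeasurableSpace X] [BorelSpace X]

lemma avgDirac_coe (y : ℕ → X) (n : ℕ) :
    (avgDirac y n : Measure X)
      = ((max n 1 : ℕ) : ℝ≥0∞)⁻¹ • ∑ i ∈ Finset.range (max n 1), Measure.dirac (y i) := rfl

lemma avgDirac_apply (y : ℕ → X) {n : ℕ} (hn : 1 ≤ n) {B : Set X} (hB : MeasurableSet B) :
    (avgDirac y n : Measure X) B
      = (n : ℝ≥0∞)⁻¹
        * ((Finset.univ.filter (fun i : Fin n => y (i : ℕ) ∈ B)).card : ℝ≥0∞) := by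
  have hmax : max n 1 = n := max_eq_left hn
  rw [avgDirac_coe, hmax, Measure.smul_apply, Measure.finset_sum_apply, smul_eq_mul]
  congr 1
  have h1 : ∀ i ∈ Finset.range n, Measure.dirac (y i) B
      = if y i ∈ B then (1:ℝ≥0∞) else 0 := by
    intro i _
    rw [Measure.dirac_apply' _ hB]
    simp [Set.indicator_apply]
  rw [Finset.sum_congr rfl h1, Finset.sum_boole]
  have h2 : ((Finset.range n).filter (fun i => y i ∈ B)).card
      = (Finset.univ.filter (fun i : Fin n => y (i:ℕ) ∈ B)).card := by
    have h3 := Fin.sum_univ_eq_sum_range (fun i => if y i ∈ B then (1:ℕ) else 0) n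
    have h4 : ∑ i : Fin n, (if y (i:ℕ) ∈ B then (1:ℕ) else 0)
        = (Finset.univ.filter (fun i : Fin n => y (i:ℕ) ∈ B)).card := by
      simp [Finset.sum_boole]
    have h5 : ∑ i ∈ Finset.range n, (if y i ∈ B then (1:ℕ) else 0)
        = ((Finset.range n).filter (fun i => y i ∈ B)).card := by
      simp [Finset.sum_boole]
    omega
  rw [h2]

lemma card_filter_le {n : ℕ} (u v : Fin n → X) (π : Equiv.Perm (Fin n)) {B : Set X}
    {εr t : ℝ} (hε : 0 < εr) (hεt : εr ≤ t)
    (hsum : ∑ i, dist (u i) (v (π i)) < εr^2 * n) :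
    ((Finset.univ.filter (fun i : Fin n => u i ∈ B)).card : ℝ)
      ≤ ((Finset.univ.filter (fun j : Fin n => v j ∈ thickening t B)).card : ℝ) + εr * n := by
  classical
  set bad := Finset.univ.filter (fun i : Fin n => εr ≤ dist (u i) (v (π i))) with hbad_def
  set good := Finset.univ.filter (fun j : Fin n => v j ∈ thickening t B) with hgood_def
  have hsubset : Finset.univ.filter (fun i : Fin n => u i ∈ B) ⊆ bad ∪ good.image π.symm := by
    intro i hi
    rw [Finset.mem_filter] at hi
    by_cases hd : εr ≤ dist (u i) (v (π i))
    · exact Finset.mem_union_left _ (Finset.mem_filter.mpr ⟨Finset.mem_univ _, hd⟩)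
    · refine Finset.mem_union_right _ ?_
      refine Finset.mem_image.mpr ⟨π i, ?_, π.symm_apply_apply i⟩
      refine Finset.mem_filter.mpr ⟨Finset.mem_univ _, ?_⟩
      refine mem_thickening_iff.mpr ⟨u i, hi.2, ?_⟩
      rw [dist_comm]
      push_neg at hd
      exact hd.trans_le hεt
  have hcard1 : (Finset.univ.filter (fun i : Fin n => u i ∈ B)).card
      ≤ bad.card + good.card := by
    refine le_trans (Finset.card_le_card hsubset) ?_
    refine le_trans (Finset.card_union_le _ _) ?_
    rw [Finset.card_image_of_injective _ (π.symm.injective)]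
  have hbad : (bad.card : ℝ) * εr ≤ ∑ i, dist (u i) (v (π i)) := by
    calc (bad.card:ℝ) * εr = ∑ _i ∈ bad, εr := by rw [Finset.sum_const, nsmul_eq_mul]
    _ ≤ ∑ i ∈ bad, dist (u i) (v (π i)) :=
        Finset.sum_le_sum fun i hi => (Finset.mem_filter.mp hi).2
    _ ≤ ∑ i, dist (u i) (v (π i)) :=
        Finset.sum_le_sum_of_subset_of_nonneg (Finset.subset_univ _)
          (fun _ _ _ => dist_nonneg)
  have hbad2 : (bad.card : ℝ) ≤ εr * n := by nlinarith [hbad.trans_lt hsum]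
  have hc : ((Finset.univ.filter (fun i : Fin n => u i ∈ B)).card : ℝ)
      ≤ (bad.card : ℝ) + (good.card : ℝ) := by exact_mod_cast hcard1
  linarith

lemma measure_le_of_card {n : ℕ} (hn : 1 ≤ n) (y z : ℕ → X) {B : Set X}
    (hB : MeasurableSet B) {εr t : ℝ} (hε : 0 < εr)
    (hcard : ((Finset.univ.filter (fun i : Fin n => y (i:ℕ) ∈ B)).card : ℝ)
      ≤ ((Finset.univ.filter (fun j : Fin n => z (j:ℕ) ∈ thickening t B)).card : ℝ) + εr * n) :
    (avgDirac y n : Measure X) B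
      ≤ (avgDirac z n : Measure X) (thickening t B) + ENNReal.ofReal εr := by
  have hn0 : (n : ℝ≥0∞) ≠ 0 := Nat.cast_ne_zero.mpr (by omega)
  have hn0' : (n : ℝ≥0∞) ≠ ⊤ := ENNReal.natCast_ne_top n
  rw [avgDirac_apply y hn hB, avgDirac_apply z hn isOpen_thickening.measurableSet]
  set a := ((Finset.univ.filter (fun i : Fin n => y (i:ℕ) ∈ B)).card : ℝ≥0∞)
  set b := ((Finset.univ.filter (fun j : Fin n => z (j:ℕ) ∈ thickening t B)).card : ℝ≥0∞)
  have hab : a ≤ b + ENNReal.ofReal (εr * n) := by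
    have h1 : a = ENNReal.ofReal ((Finset.univ.filter
        (fun i : Fin n => y (i:ℕ) ∈ B)).card : ℝ) := by
      rw [ENNReal.ofReal_natCast]
    have h2 : b + ENNReal.ofReal (εr * n) = ENNReal.ofReal
        (((Finset.univ.filter (fun j : Fin n => z (j:ℕ) ∈ thickening t B)).card : ℝ)
          + εr * n) := by
      rw [ENNReal.ofReal_add (by positivity) (by positivity), ENNReal.ofReal_natCast]
    rw [h1, h2]
    exact ENNReal.ofReal_le_ofReal hcard
  calc (n : ℝ≥0∞)⁻¹ * a ≤ (n : ℝ≥0∞)⁻¹ * (b + ENNReal.ofReal (εr * n)) :=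
        by gcongr
  _ = (n : ℝ≥0∞)⁻¹ * b + (n : ℝ≥0∞)⁻¹ * ENNReal.ofReal (εr * n) := by rw [mul_add]
  _ = (n : ℝ≥0∞)⁻¹ * b + ENNReal.ofReal εr := by
      congr 1
      rw [ENNReal.ofReal_mul hε.le, ENNReal.ofReal_natCast]
      rw [← mul_assoc, mul_comm ((n:ℝ≥0∞)⁻¹), mul_assoc,
        ENNReal.inv_mul_cancel hn0 hn0', mul_one]

lemma lp_le_matching {n : ℕ} (hn : 1 ≤ n) (y z : ℕ → X) (σ : Equiv.Perm (Fin n)) {εr : ℝ}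
    (hε : 0 < εr)
    (hsum : ∑ i : Fin n, dist (y (i:ℕ)) (z (((σ i) : Fin n) : ℕ)) < εr^2 * n) :
    levyProkhorovEDist (avgDirac y n : Measure X) (avgDirac z n : Measure X)
      ≤ ENNReal.ofReal εr := by
  refine levyProkhorovEDist_le_of_forall _ _ _ ?_
  intro ε' B hε' hε'top hB
  set t := ε'.toReal with ht
  have htε : εr < t := (ENNReal.ofReal_lt_iff_lt_toReal hε.le hε'top.ne).mp hε'
  have hofle : ENNReal.ofReal εr ≤ ε' := by
    calc ENNReal.ofReal εr ≤ ENNReal.ofReal t := ENNReal.ofReal_le_ofReal htε.le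
    _ = ε' := ENNReal.ofReal_toReal hε'top.ne
  have hsum' : ∑ j : Fin n, dist (z (j:ℕ)) (y (((σ.symm j) : Fin n) : ℕ)) < εr^2 * n := by
    have hre := Equiv.sum_comp σ (fun j => dist (z (j:ℕ)) (y (((σ.symm j) : Fin n) : ℕ)))
    rw [← hre]
    refine lt_of_le_of_lt (le_of_eq (Finset.sum_congr rfl fun i _ => ?_)) hsum
    rw [Equiv.symm_apply_apply, dist_comm]
  constructor
  · refine le_trans (measure_le_of_card hn y z hB hε
      (card_filter_le (fun i => y (i:ℕ)) (fun j => z (j:ℕ)) σ hε htε.le hsum))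
      (add_le_add_right hofle _)
  · refine le_trans (measure_le_of_card hn z y hB hε
      (card_filter_le (fun j => z (j:ℕ)) (fun i => y (i:ℕ)) σ.symm hε htε.le hsum'))
      (add_le_add_right hofle _)

variable [TopologicalSpace.SeparableSpace X]

lemma tendsto_iff_lp (νn : ℕ → ProbabilityMeasure X) (ν : ProbabilityMeasure X) :
    Tendsto νn atTop (𝓝 ν)
      ↔ Tendsto (fun n => levyProkhorovEDist (νn n : Measure X) (ν : Measure X))
          atTop (𝓝 0) := by
  set H := LevyProkhorov.probabilityMeasureHomeomorph (Ω := X)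
  have h1 : Tendsto νn atTop (𝓝 ν) ↔ Tendsto (fun n => H (νn n)) atTop (𝓝 (H ν)) :=
    (H.isInducing.tendsto_nhds_iff).symm.symm
  rw [h1, tendsto_iff_dist_tendsto_zero]
  have hdist : ∀ n, dist (H (νn n)) (H ν)
      = (levyProkhorovEDist (νn n : Measure X) (ν : Measure X)).toReal := fun n => rfl
  simp only [hdist]
  constructor
  · intro h
    have heq : (fun n => levyProkhorovEDist (νn n : Measure X) (ν : Measure X))
        = fun n => ENNReal.ofReal
          ((levyProkhorovEDist (νn n : Measure X) (ν : Measure X)).toReal) := by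
      funext n
      rw [ENNReal.ofReal_toReal (levyProkhorovEDist_ne_top _ _)]
    rw [heq]
    have := (ENNReal.continuous_ofReal.tendsto 0).comp h
    simpa [Function.comp_def] using this
  · intro h
    have := (ENNReal.tendsto_toReal (a := 0) (by simp)).comp h
    simpa [Function.comp_def] using this

end Link

section Main

variable {X : Type*} [MetricSpace X] [MeasurableSpace X] [BorelSpace X]

lemma eventually_matching (hd : ∃ C, ∀ a b : X, dist a b ≤ C) (T : X → X) (y x : X) {c : ℝ}
    (hc : meanOrbitalDist T y x < c) :
    ∀ᶠ n in atTop, 1 ≤ n ∧ ∃ σ : Equiv.Perm (Fin n),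
      ∑ i : Fin n, dist (T^[(i:ℕ)] y) (T^[(((σ i) : Fin n):ℕ)] x) < c * n := by
  obtain ⟨C, hC⟩ := hd
  rw [meanOrbitalDist] at hc
  have hbdd : IsBoundedUnder (· ≤ ·) atTop (fun n => ⨅ σ : Equiv.Perm (Fin n),
      (∑ i : Fin n, dist (T^[(i:ℕ)] y) (T^[(((σ i) : Fin n):ℕ)] x)) / n) := by
    refine ⟨max C 0, ?_⟩
    rw [eventually_map]
    refine Eventually.of_forall fun n => ?_
    have hbb : BddBelow (Set.range (fun σ : Equiv.Perm (Fin n) =>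
        (∑ i : Fin n, dist (T^[(i:ℕ)] y) (T^[(((σ i) : Fin n):ℕ)] x)) / n)) := by
      refine ⟨0, ?_⟩
      rintro r ⟨σ, rfl⟩
      positivity
    refine le_trans (ciInf_le hbb (Equiv.refl _)) ?_
    rcases Nat.eq_zero_or_pos n with rfl | hn
    · simp
    · rw [div_le_iff₀ (by exact_mod_cast hn)]
      calc ∑ i : Fin n, dist (T^[(i:ℕ)] y) (T^[(((Equiv.refl (Fin n)) i : Fin n):ℕ)] x)
          ≤ ∑ _i : Fin n, max C 0 :=
            Finset.sum_le_sum fun i _ => le_trans (hC _ _) (le_max_left _ _)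
      _ = n * max C 0 := by
          rw [Finset.sum_const, Finset.card_univ, Fintype.card_fin, nsmul_eq_mul]
      _ = max C 0 * n := mul_comm _ _
  have hev := eventually_lt_of_limsup_lt hc hbdd
  filter_upwards [hev, eventually_ge_atTop 1] with n hn hn1
  refine ⟨hn1, ?_⟩
  obtain ⟨σ, hσ⟩ := exists_lt_of_ciInf_lt hn
  refine ⟨σ, ?_⟩
  have hnpos : (0:ℝ) < n := by exact_mod_cast hn1
  rwa [div_lt_iff₀ hnpos] at hσ

theorem main_stmt3 [TopologicalSpace.SeparableSpace X] [CompleteSpace X]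
    (hd : ∃ C, ∀ a b : X, dist a b ≤ C)
    (T : X → X) (xk : ℕ → X) (x : X)
    (hq : ∀ k, ∃ μ : ProbabilityMeasure X, genericFor T (xk k) μ)
    (hconv : Tendsto (fun k => meanOrbitalDist T (xk k) x) atTop (𝓝 0)) :
    ∃ μ : ProbabilityMeasure X, genericFor T x μ := by
  haveI : Nonempty X := by
    rcases isEmpty_or_nonempty X with hE | hNE
    · exfalso
      obtain ⟨μ0, -⟩ := hq 0
      have h1 : (μ0 : Measure X) Set.univ = 1 := measure_univ
      rw [Set.univ_eq_empty_iff.mpr hE] at h1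
      simp at h1
    · exact hNE
  classical
  choose μk hμk using hq
  set orb : ℕ → ℕ → X := fun k i => T^[i] (xk k) with horb
  set orbx : ℕ → X := fun i => T^[i] x with horbx
  have hLPk : ∀ k, Tendsto (fun n =>
      levyProkhorovEDist (avgDirac (orb k) n : Measure X) (μk k : Measure X))
      atTop (𝓝 0) := fun k => (tendsto_iff_lp _ _).mp (hμk k)
  have hPk : ∀ k, IsProbabilityMeasure ((μk k : Measure X)) := fun k => (μk k).2
  have hCauchy : ∀ ε : ℝ, 0 < ε → ∃ K, ∀ k l, K ≤ k → K ≤ l →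
      levyProkhorovEDist (μk k : Measure X) (μk l : Measure X) < ENNReal.ofReal ε := by
    intro ε hε
    set δ := ε/5 with hδdef
    have hδ : 0 < δ := by positivity
    have hsq : (0:ℝ) < δ^2 := by positivity
    have hevk : ∀ᶠ k in atTop, meanOrbitalDist T (xk k) x < δ^2 :=
      hconv.eventually (gt_mem_nhds hsq)
    obtain ⟨K, hK⟩ := eventually_atTop.mp hevk
    refine ⟨K, fun k l hk hl => ?_⟩
    have e1 := eventually_matching hd T (xk k) x (hK k hk)
    have e2 := eventually_matching hd T (xk l) x (hK l hl)
    have e3 := (hLPk k).eventually (gt_mem_nhds (ENNReal.ofReal_pos.mpr hδ))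
    have e4 := (hLPk l).eventually (gt_mem_nhds (ENNReal.ofReal_pos.mpr hδ))
    obtain ⟨n, ⟨⟨⟨hn1, hex_k⟩, ⟨-, hex_l⟩⟩, h3⟩, h4⟩ := (((e1.and e2).and e3).and e4).exists
    obtain ⟨σk, hσk⟩ := hex_k
    obtain ⟨σl, hσl⟩ := hex_l
    have m1 : levyProkhorovEDist (μk k : Measure X) (avgDirac (orb k) n : Measure X)
        ≤ ENNReal.ofReal δ := by
      rw [levyProkhorovEDist_comm]; exact h3.le
    have m2 : levyProkhorovEDist (avgDirac (orb k) n : Measure X)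
        (avgDirac orbx n : Measure X) ≤ ENNReal.ofReal δ :=
      lp_le_matching hn1 (orb k) orbx σk hδ hσk
    have m3 : levyProkhorovEDist (avgDirac orbx n : Measure X)
        (avgDirac (orb l) n : Measure X) ≤ ENNReal.ofReal δ := by
      rw [levyProkhorovEDist_comm]
      exact lp_le_matching hn1 (orb l) orbx σl hδ hσl
    have m4 : levyProkhorovEDist (avgDirac (orb l) n : Measure X) (μk l : Measure X)
        ≤ ENNReal.ofReal δ := h4.le
    have htot : levyProkhorovEDist (μk k : Measure X) (μk l : Measure X)
        ≤ ENNReal.ofReal δ + ENNReal.ofReal δ + ENNReal.ofReal δ + ENNReal.ofReal δ := by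
      calc levyProkhorovEDist (μk k : Measure X) (μk l : Measure X)
          ≤ levyProkhorovEDist (μk k : Measure X) (avgDirac (orb k) n : Measure X)
            + levyProkhorovEDist (avgDirac (orb k) n : Measure X) (μk l : Measure X) :=
            levyProkhorovEDist_triangle _ _ _
      _ ≤ levyProkhorovEDist (μk k : Measure X) (avgDirac (orb k) n : Measure X)
            + (levyProkhorovEDist (avgDirac (orb k) n : Measure X)
                (avgDirac orbx n : Measure X)
              + levyProkhorovEDist (avgDirac orbx n : Measure X) (μk l : Measure X)) :=
            add_le_add_right (levyProkhorovEDist_triangle _ _ _) _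
      _ ≤ levyProkhorovEDist (μk k : Measure X) (avgDirac (orb k) n : Measure X)
            + (levyProkhorovEDist (avgDirac (orb k) n : Measure X)
                (avgDirac orbx n : Measure X)
              + (levyProkhorovEDist (avgDirac orbx n : Measure X)
                  (avgDirac (orb l) n : Measure X)
                + levyProkhorovEDist (avgDirac (orb l) n : Measure X)
                  (μk l : Measure X))) := by
            refine add_le_add_right (add_le_add_right (levyProkhorovEDist_triangle _ _ _) _) _
      _ ≤ ENNReal.ofReal δ + (ENNReal.ofReal δ + (ENNReal.ofReal δ + ENNReal.ofReal δ)) :=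
            add_le_add m1 (add_le_add m2 (add_le_add m3 m4))
      _ = ENNReal.ofReal δ + ENNReal.ofReal δ + ENNReal.ofReal δ + ENNReal.ofReal δ := by
            ring
    refine lt_of_le_of_lt htot ?_
    rw [← ENNReal.ofReal_add hδ.le hδ.le, ← ENNReal.ofReal_add (by linarith) hδ.le,
      ← ENNReal.ofReal_add (by linarith) hδ.le]
    refine (ENNReal.ofReal_lt_ofReal_iff hε).mpr ?_
    rw [hδdef]; linarith
  obtain ⟨ν, hν, hten⟩ := Stmt3Aux.exists_LP_limit (μs := fun k => (μk k : Measure X))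
    hPk hCauchy
  refine ⟨⟨ν, hν⟩, ?_⟩
  refine (tendsto_iff_lp _ _).mpr ?_
  rw [ENNReal.tendsto_nhds_zero]
  intro η hη
  obtain ⟨ε, hε, hεη⟩ : ∃ ε : ℝ, 0 < ε ∧
      ENNReal.ofReal ε + (ENNReal.ofReal ε + ENNReal.ofReal ε) ≤ η := by
    rcases eq_top_or_lt_top η with rfl | hfin
    · exact ⟨1, one_pos, le_top⟩
    · have hpos : 0 < η.toReal := ENNReal.toReal_pos hη.ne' hfin.ne
      refine ⟨η.toReal/3, by positivity, ?_⟩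
      rw [← ENNReal.ofReal_add (by positivity) (by positivity),
        ← ENNReal.ofReal_add (by positivity) (by positivity)]
      calc ENNReal.ofReal (η.toReal/3 + (η.toReal/3 + η.toReal/3))
          = ENNReal.ofReal η.toReal := by congr 1; ring
      _ ≤ η := le_of_eq (ENNReal.ofReal_toReal hfin.ne)
  have hevk : ∀ᶠ k in atTop, meanOrbitalDist T (xk k) x < ε^2 :=
    hconv.eventually (gt_mem_nhds (by positivity))
  have hevν : ∀ᶠ k in atTop, levyProkhorovEDist (μk k : Measure X) ν < ENNReal.ofReal ε :=
    hten.eventually (gt_mem_nhds (ENNReal.ofReal_pos.mpr hε))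
  obtain ⟨k, hk1, hk2⟩ := (hevk.and hevν).exists
  filter_upwards [eventually_matching hd T (xk k) x hk1,
    (hLPk k).eventually (gt_mem_nhds (ENNReal.ofReal_pos.mpr hε))] with n hmatch hlp
  obtain ⟨hn1, σ, hσ⟩ := hmatch
  have m1 : levyProkhorovEDist (avgDirac orbx n : Measure X)
      (avgDirac (orb k) n : Measure X) ≤ ENNReal.ofReal ε := by
    rw [levyProkhorovEDist_comm]
    exact lp_le_matching hn1 (orb k) orbx σ hε hσ
  show levyProkhorovEDist (avgDirac orbx n : Measure X) ν ≤ η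
  calc levyProkhorovEDist (avgDirac orbx n : Measure X) ν
      ≤ levyProkhorovEDist (avgDirac orbx n : Measure X) (avgDirac (orb k) n : Measure X)
        + levyProkhorovEDist (avgDirac (orb k) n : Measure X) ν :=
        levyProkhorovEDist_triangle _ _ _
  _ ≤ levyProkhorovEDist (avgDirac orbx n : Measure X) (avgDirac (orb k) n : Measure X)
        + (levyProkhorovEDist (avgDirac (orb k) n : Measure X) (μk k : Measure X)
          + levyProkhorovEDist (μk k : Measure X) ν) :=
        add_le_add_right (levyProkhorovEDist_triangle _ _ _) _
  _ ≤ ENNReal.ofReal ε + (ENNReal.ofReal ε + ENNReal.ofReal ε) :=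
        add_le_add m1 (add_le_add hlp.le hk2.le)
  _ ≤ η := hεη

end Main

end Stmt3Aux

theorem stmt3 {X : Type*} [MetricSpace X] [TopologicalSpace.SeparableSpace X]
    [CompleteSpace X] [MeasurableSpace X] [BorelSpace X]
    (hd : ∃ C, ∀ a b : X, dist a b ≤ C)
    (T : X → X) (hT : Continuous T) (xk : ℕ → X) (x : X)
    (hq : ∀ k, ∃ μ : ProbabilityMeasure X, genericFor T (xk k) μ)
    (hconv : Tendsto (fun k => meanOrbitalDist T (xk k) x) atTop (𝓝 0)) :
    ∃ μ : ProbabilityMeasure X, genericFor T x μ :=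
  Stmt3Aux.main_stmt3 hd T xk x hq hconv
end

section
/- Let (X,T) be a Polish dynamical system, A ⊂ Per(T) a set of periodic points, and B ⊂ Q_T(X) a set of quasi-regular points. Then {μ_x : x ∈ A} is dense in {μ_y : y ∈ B} (in the weak* topology on invariant measures) if and only if for every y ∈ B, ε > 0, and N ∈ ℕ there exist x ∈ A and n ≥ N with T^n x = x and min_{σ∈S_n} (1/n) Σ_{i=0}^{n-1} d(T^i x, T^{σ(i)} y) < ε. -/
open MeasureTheory Filter Topology
open scoped ENNReal NNReal

section Aux
open Metric
variable {X : Type*} [MetricSpace X] [MeasurableSpace X] [BorelSpace X]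

open Classical in
lemma avgDirac_coe (a : ℕ → X) {n : ℕ} (hn : 0 < n) :
    (avgDirac a n : Measure X)
      = (n : ℝ≥0∞)⁻¹ • ∑ i ∈ Finset.range n, Measure.dirac (a i) := by
  simp [avgDirac, Nat.max_eq_left hn]

open Classical in
lemma avgDirac_apply (a : ℕ → X) {n : ℕ} (hn : 0 < n) {B : Set X} (hB : MeasurableSet B) :
    (avgDirac a n : Measure X) B
      = (n : ℝ≥0∞)⁻¹ * ((Finset.univ.filter (fun i : Fin n => a (i : ℕ) ∈ B)).card : ℕ) := by
  rw [avgDirac_coe a hn, Measure.smul_apply, Measure.finset_sum_apply, smul_eq_mul]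
  congr 1
  rw [Finset.sum_range fun i => Measure.dirac (a i) B]
  simp only [Measure.dirac_apply' _ hB, Set.indicator_apply, Pi.one_apply]
  rw [Finset.sum_boole]

open Classical in
lemma measure_le_aux {n : ℕ} (hn : 0 < n) (a b : ℕ → X) (σ : Equiv.Perm (Fin n)) {t ε : ℝ}
    (ht : 0 ≤ t) (htε : t < ε)
    (hK : ((Finset.univ.filter
        (fun i : Fin n => t ≤ dist (a (i : ℕ)) (b ((σ i : Fin n) : ℕ)))).card : ℝ) ≤ t * n)
    {B : Set X} (hB : MeasurableSet B) :
    (avgDirac a n : Measure X) B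
      ≤ (avgDirac b n : Measure X) (thickening ε B) + ENNReal.ofReal ε := by
  set bad := Finset.univ.filter
      (fun i : Fin n => t ≤ dist (a (i : ℕ)) (b ((σ i : Fin n) : ℕ))) with hbad
  rw [avgDirac_apply a hn hB, avgDirac_apply b hn isOpen_thickening.measurableSet]
  set cA := (Finset.univ.filter (fun i : Fin n => a (i : ℕ) ∈ B)).card with hcA
  set cB := (Finset.univ.filter (fun j : Fin n => b (j : ℕ) ∈ thickening ε B)).card with hcB
  -- counting inequality
  have hcard : cA ≤ cB + bad.card := by
    have hsub : Finset.univ.filter (fun i : Fin n => a (i : ℕ) ∈ B)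
        ⊆ (Finset.univ.filter (fun i : Fin n => a (i : ℕ) ∈ B ∧
            dist (a (i : ℕ)) (b ((σ i : Fin n) : ℕ)) < t)) ∪ bad := by
      intro i hi
      simp only [Finset.mem_filter, Finset.mem_univ, true_and] at hi
      by_cases hd : dist (a (i : ℕ)) (b ((σ i : Fin n) : ℕ)) < t
      · exact Finset.mem_union_left _ (by simp [hi, hd])
      · exact Finset.mem_union_right _ (by simp [hbad, le_of_not_gt hd])
    have hgood : (Finset.univ.filter (fun i : Fin n => a (i : ℕ) ∈ B ∧
        dist (a (i : ℕ)) (b ((σ i : Fin n) : ℕ)) < t)).card ≤ cB := by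
      apply Finset.card_le_card_of_injOn (fun i => σ i)
      · intro i hi
        simp only [Finset.mem_coe, Finset.mem_filter, Finset.mem_univ, true_and] at hi ⊢
        exact mem_thickening_iff.mpr ⟨a (i : ℕ), hi.1, by
          rw [dist_comm]; exact lt_of_lt_of_le hi.2 htε.le⟩
      · exact fun i _ j _ h => σ.injective h
    calc cA ≤ ((Finset.univ.filter (fun i : Fin n => a (i : ℕ) ∈ B ∧
            dist (a (i : ℕ)) (b ((σ i : Fin n) : ℕ)) < t)) ∪ bad).card :=
          Finset.card_le_card hsub
      _ ≤ _ + bad.card := Finset.card_union_le _ _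
      _ ≤ cB + bad.card := by omega
  -- ENNReal arithmetic
  have hn0 : (n : ℝ≥0∞) ≠ 0 := by exact_mod_cast hn.ne'
  have hnt : (n : ℝ≥0∞) ≠ ⊤ := ENNReal.natCast_ne_top n
  have h1 : ((bad.card : ℝ≥0∞)) ≤ ENNReal.ofReal t * n := by
    rw [← ENNReal.ofReal_natCast bad.card, ← ENNReal.ofReal_natCast n, ← ENNReal.ofReal_mul ht]
    exact ENNReal.ofReal_le_ofReal hK
  have h2 : (n : ℝ≥0∞)⁻¹ * bad.card ≤ ENNReal.ofReal ε := by
    calc (n : ℝ≥0∞)⁻¹ * bad.card ≤ (n : ℝ≥0∞)⁻¹ * (ENNReal.ofReal t * n) :=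
          mul_le_mul_right h1 _
    _ = ENNReal.ofReal t * ((n : ℝ≥0∞) * (n : ℝ≥0∞)⁻¹) := by ring
    _ = ENNReal.ofReal t := by rw [ENNReal.mul_inv_cancel hn0 hnt, mul_one]
    _ ≤ ENNReal.ofReal ε := ENNReal.ofReal_le_ofReal htε.le
  calc (n : ℝ≥0∞)⁻¹ * cA ≤ (n : ℝ≥0∞)⁻¹ * (cB + bad.card : ℕ) := by
        exact mul_le_mul_right (by exact_mod_cast hcard) _
    _ = (n : ℝ≥0∞)⁻¹ * cB + (n : ℝ≥0∞)⁻¹ * bad.card := by push_cast; rw [mul_add]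
    _ ≤ (n : ℝ≥0∞)⁻¹ * cB + ENNReal.ofReal ε := add_le_add le_rfl h2

open Classical in
lemma lp_le_of_matching {n : ℕ} (hn : 0 < n) (a b : ℕ → X) (σ : Equiv.Perm (Fin n)) {t : ℝ}
    (ht : 0 ≤ t)
    (hK : ((Finset.univ.filter
        (fun i : Fin n => t ≤ dist (a (i : ℕ)) (b ((σ i : Fin n) : ℕ)))).card : ℝ) ≤ t * n) :
    levyProkhorovDist (avgDirac a n : Measure X) (avgDirac b n : Measure X) ≤ t := by
  apply levyProkhorovDist_le_of_forall_le _ _ ht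
  intro ε B hε hB
  exact measure_le_aux hn a b σ ht hε hK hB

open Classical in
lemma exists_matching_of_lp {n : ℕ} (hn : 0 < n) (a b : ℕ → X) {δ C : ℝ} (hδ : 0 < δ)
    (hC0 : 0 ≤ C) (hC : ∀ p q : X, dist p q ≤ C)
    (h : levyProkhorovDist (avgDirac a n : Measure X) (avgDirac b n : Measure X) < δ) :
    ∃ σ : Equiv.Perm (Fin n),
      (∑ i : Fin n, dist (a (i : ℕ)) (b ((σ i : Fin n) : ℕ))) / n ≤ δ * (1 + C) + C / n := by
  have hn' : (0 : ℝ) < n := by exact_mod_cast hn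
  -- edist version
  have hE : levyProkhorovEDist (avgDirac a n : Measure X) (avgDirac b n : Measure X)
      < ENNReal.ofReal δ := by
    rw [ENNReal.lt_ofReal_iff_toReal_lt (levyProkhorovEDist_ne_top _ _)]
    exact h
  -- Hall-type marriage condition
  set N : Finset (Fin n) → Finset (Fin n) := fun S =>
    Finset.univ.filter (fun j : Fin n => ∃ i ∈ S, dist (b (j : ℕ)) (a (i : ℕ)) < δ) with hN
  have key : ∀ S : Finset (Fin n), (S.card : ℝ) ≤ ((N S).card : ℝ) + δ * n := by
    intro S
    set B : Set X := ↑(S.image (fun i : Fin n => a (i : ℕ))) with hB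
    have hBm : MeasurableSet B := (S.image (fun i : Fin n => a (i : ℕ))).finite_toSet.isClosed.measurableSet
    have h1 := left_measure_le_of_levyProkhorovEDist_lt hE hBm
    rw [ENNReal.toReal_ofReal hδ.le] at h1
    rw [avgDirac_apply a hn hBm, avgDirac_apply b hn isOpen_thickening.measurableSet] at h1
    have hTeq : (Finset.univ.filter (fun j : Fin n => b (j : ℕ) ∈ thickening δ B)).card
        = (N S).card := by
      congr 1
      apply Finset.filter_congr
      intro j _
      rw [mem_thickening_iff]
      constructor
      · rintro ⟨z, hz, hdz⟩
        simp only [hB, Finset.coe_image, Set.mem_image, Finset.mem_coe] at hz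
        obtain ⟨i, hi, rfl⟩ := hz
        exact ⟨i, hi, hdz⟩
      · rintro ⟨i, hi, hdi⟩
        exact ⟨a (i : ℕ), by simp [hB]; exact ⟨i, hi, rfl⟩, hdi⟩
    -- convert ENNReal inequality to ℝ
    have hn0 : (n : ℝ≥0∞) ≠ 0 := by exact_mod_cast hn.ne'
    have hnt : (n : ℝ≥0∞) ≠ ⊤ := ENNReal.natCast_ne_top n
    have h2 : ((S.card : ℝ≥0∞)) ≤ ((N S).card : ℝ≥0∞) + ENNReal.ofReal δ * n := by
      have := mul_le_mul_right h1 (n : ℝ≥0∞)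
      rw [mul_add, ← mul_assoc, ← mul_assoc, ENNReal.mul_inv_cancel hn0 hnt, one_mul, one_mul,
        hTeq] at this
      rw [mul_comm ((n : ℝ≥0∞)) (ENNReal.ofReal δ)] at this
      refine le_trans (Nat.cast_le.mpr (Finset.card_le_card ?_)) this
      intro i hi
      simp only [Finset.mem_filter, Finset.mem_univ, true_and, hB, Finset.coe_image,
        Set.mem_image, Finset.mem_coe]
      exact ⟨i, hi, rfl⟩
    have hfin : ((N S).card : ℝ≥0∞) + ENNReal.ofReal δ * n ≠ ⊤ := by
      apply ENNReal.add_ne_top.mpr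
      exact ⟨ENNReal.natCast_ne_top _, ENNReal.mul_ne_top ENNReal.ofReal_ne_top hnt⟩
    have := ENNReal.toReal_mono hfin h2
    rwa [ENNReal.toReal_natCast, ENNReal.toReal_add (ENNReal.natCast_ne_top _)
      (ENNReal.mul_ne_top ENNReal.ofReal_ne_top hnt), ENNReal.toReal_natCast,
      ENNReal.toReal_mul, ENNReal.toReal_ofReal hδ.le, ENNReal.toReal_natCast] at this
  -- defect
  set D : ℕ := ⌈δ * n⌉₊ with hD
  have hDge : (δ * n : ℝ) ≤ D := Nat.le_ceil _
  have hDle : (D : ℝ) ≤ δ * n + 1 := (Nat.ceil_lt_add_one (by positivity)).le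
  -- Hall
  set t' : Fin n → Finset (Fin n ⊕ Fin D) := fun i =>
    ((Finset.univ.filter (fun j : Fin n => dist (b (j : ℕ)) (a (i : ℕ)) < δ)).image Sum.inl)
      ∪ (Finset.univ.image Sum.inr) with ht'
  have hall : ∀ S : Finset (Fin n), S.card ≤ (S.biUnion t').card := by
    intro S
    rcases Finset.eq_empty_or_nonempty S with rfl | ⟨i₀, hi₀⟩
    · simp
    have hsub : ((N S).image Sum.inl ∪ Finset.univ.image (Sum.inr : Fin D → Fin n ⊕ Fin D))
        ⊆ S.biUnion t' := by
      intro z hz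
      rcases Finset.mem_union.mp hz with hz | hz
      · obtain ⟨j, hj, rfl⟩ := Finset.mem_image.mp hz
        simp only [hN, Finset.mem_filter, Finset.mem_univ, true_and] at hj
        obtain ⟨i, hi, hdi⟩ := hj
        exact Finset.mem_biUnion.mpr ⟨i, hi, Finset.mem_union_left _
          (Finset.mem_image.mpr ⟨j, by simp [hdi], rfl⟩)⟩
      · exact Finset.mem_biUnion.mpr ⟨i₀, hi₀, Finset.mem_union_right _ hz⟩
    have hcardu : ((N S).image Sum.inl
        ∪ Finset.univ.image (Sum.inr : Fin D → Fin n ⊕ Fin D)).card = (N S).card + D := by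
      rw [Finset.card_union_of_disjoint, Finset.card_image_of_injective _ Sum.inl_injective,
        Finset.card_image_of_injective _ Sum.inr_injective, Finset.card_univ, Fintype.card_fin]
      · rw [Finset.disjoint_left]
        rintro z hz hz'
        obtain ⟨j, _, rfl⟩ := Finset.mem_image.mp hz
        obtain ⟨d, _, hd⟩ := Finset.mem_image.mp hz'
        exact Sum.inl_ne_inr hd.symm
    have hnat : S.card ≤ (N S).card + D := by
      have : (S.card : ℝ) ≤ ((N S).card : ℝ) + D := (key S).trans (by linarith)
      exact_mod_cast this
    calc S.card ≤ (N S).card + D := hnat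
      _ = ((N S).image Sum.inl ∪ Finset.univ.image (Sum.inr : Fin D → Fin n ⊕ Fin D)).card :=
          hcardu.symm
      _ ≤ (S.biUnion t').card := Finset.card_le_card hsub
  obtain ⟨f, f_inj, hf⟩ := (Finset.all_card_le_biUnion_card_iff_exists_injective t').mp hall
  -- good indices and partial matching
  set good : Finset (Fin n) := Finset.univ.filter (fun i => (f i).isLeft) with hgood
  set g : Fin n → Fin n := fun i => Sum.elim id (fun _ => i) (f i) with hg
  have hfg : ∀ i ∈ good, f i = Sum.inl (g i) := by
    intro i hi
    simp only [hgood, Finset.mem_filter, Finset.mem_univ, true_and] at hi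
    rcases hfi : f i with j | d
    · simp [hg, hfi]
    · rw [hfi] at hi; simp at hi
  have hgd : ∀ i ∈ good, dist (b ((g i : Fin n) : ℕ)) (a (i : ℕ)) < δ := by
    intro i hi
    have := hf i
    rw [hfg i hi, ht'] at this
    rcases Finset.mem_union.mp this with h' | h'
    · obtain ⟨j, hj, hj2⟩ := Finset.mem_image.mp h'
      simp only [Finset.mem_filter, Finset.mem_univ, true_and] at hj
      rwa [← Sum.inl_injective hj2]
    · obtain ⟨d, _, hd⟩ := Finset.mem_image.mp h'
      exact absurd hd (by simp)
  have hg_inj : Set.InjOn g good := by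
    intro i hi j hj hij
    apply f_inj
    rw [hfg i hi, hfg j hj, hij]
  set u : Finset (Fin n) := good.image g with hu
  have hcard_u : u.card = good.card := Finset.card_image_of_injOn hg_inj
  -- bad count
  have hbadcard : (goodᶜ : Finset (Fin n)).card ≤ D := by
    have : (goodᶜ : Finset (Fin n)).card ≤ (Finset.univ.image (Sum.inr : Fin D → Fin n ⊕ Fin D)).card := by
      apply Finset.card_le_card_of_injOn f
      · intro i hi
        simp only [Finset.mem_coe, Finset.mem_compl, hgood, Finset.mem_filter, Finset.mem_univ, true_and] at hi
        rcases hfi : f i with j | d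
        · rw [hfi] at hi; simp at hi
        · exact Finset.mem_image.mpr ⟨d, Finset.mem_univ _, rfl⟩
      · exact f_inj.injOn
    calc (goodᶜ : Finset (Fin n)).card ≤ _ := this
      _ ≤ (Finset.univ : Finset (Fin D)).card := Finset.card_image_le
      _ = D := by rw [Finset.card_univ, Fintype.card_fin]
  -- build the permutation
  have he₁bij : Function.Bijective (fun i : {x // x ∈ good} =>
      (⟨g i, Finset.mem_image_of_mem g i.2⟩ : {x // x ∈ u})) := by
    rw [Fintype.bijective_iff_injective_and_card]
    constructor
    · intro i j hij
      exact Subtype.ext (hg_inj i.2 j.2 (by simpa using congrArg Subtype.val hij))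
    · simp only [Fintype.card_coe, hcard_u]
  set e₁ : {x // x ∈ good} ≃ {x // x ∈ u} := Equiv.ofBijective _ he₁bij with he₁
  have hccard : Fintype.card {x // ¬ x ∈ good} = Fintype.card {x // ¬ x ∈ u} := by
    rw [Fintype.card_subtype_compl, Fintype.card_subtype_compl]
    congr 1
    rw [Fintype.card_coe, Fintype.card_coe, hcard_u]
  set e₂ : {x // ¬ x ∈ good} ≃ {x // ¬ x ∈ u} := Fintype.equivOfCardEq hccard with he₂
  set σ : Equiv.Perm (Fin n) :=
    ((Equiv.sumCompl (· ∈ good)).symm.trans ((e₁.sumCongr e₂).trans (Equiv.sumCompl (· ∈ u))))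
    with hσdef
  have hσg : ∀ i ∈ good, σ i = g i := by
    intro i hi
    show (Equiv.sumCompl (· ∈ u)) ((e₁.sumCongr e₂) ((Equiv.sumCompl (· ∈ good)).symm i)) = g i
    rw [Equiv.sumCompl_symm_apply_of_pos hi]
    rfl
  refine ⟨σ, ?_⟩
  have hsum : (∑ i : Fin n, dist (a (i : ℕ)) (b ((σ i : Fin n) : ℕ)))
      ≤ n * δ + (δ * n + 1) * C := by
    rw [← Finset.sum_add_sum_compl good (fun i : Fin n => dist (a (i : ℕ)) (b ((σ i : Fin n) : ℕ)))]
    have hcardn : (good.card : ℝ) ≤ n := by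
      exact_mod_cast (Finset.card_le_univ good).trans_eq (by simp)
    have h1 : ∑ i ∈ good, dist (a (i : ℕ)) (b ((σ i : Fin n) : ℕ)) ≤ (n : ℝ) * δ := by
      have hb : ∀ i ∈ good, dist (a (i : ℕ)) (b ((σ i : Fin n) : ℕ)) ≤ δ := fun i hi => by
        rw [hσg i hi, dist_comm]; exact (hgd i hi).le
      calc ∑ i ∈ good, dist (a (i : ℕ)) (b ((σ i : Fin n) : ℕ)) ≤ good.card • δ :=
            Finset.sum_le_card_nsmul _ _ _ hb
        _ = (good.card : ℝ) * δ := nsmul_eq_mul _ _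
        _ ≤ (n : ℝ) * δ := mul_le_mul_of_nonneg_right hcardn hδ.le
    have h2 : ∑ i ∈ goodᶜ, dist (a (i : ℕ)) (b ((σ i : Fin n) : ℕ)) ≤ (δ * n + 1) * C := by
      have hDr : ((goodᶜ : Finset (Fin n)).card : ℝ) ≤ δ * n + 1 := by
        calc ((goodᶜ : Finset (Fin n)).card : ℝ) ≤ (D : ℝ) := by exact_mod_cast hbadcard
          _ ≤ δ * n + 1 := hDle
      calc ∑ i ∈ goodᶜ, dist (a (i : ℕ)) (b ((σ i : Fin n) : ℕ))
          ≤ (goodᶜ : Finset (Fin n)).card • C :=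
            Finset.sum_le_card_nsmul _ _ _ (fun i _ => hC _ _)
        _ = ((goodᶜ : Finset (Fin n)).card : ℝ) * C := nsmul_eq_mul _ _
        _ ≤ (δ * n + 1) * C := mul_le_mul_of_nonneg_right hDr hC0
    linarith
  rw [div_le_iff₀ hn']
  have heq : (δ * (1 + C) + C / n) * n = n * δ + (δ * n + 1) * C := by
    field_simp
    ring
  rw [heq]
  exact hsum

open Classical in
lemma markov_count {n : ℕ} (hn : 0 < n) (a b : ℕ → X) (σ : Equiv.Perm (Fin n)) {t : ℝ}
    (ht : 0 < t)
    (hsum : (∑ i : Fin n, dist (a (i : ℕ)) (b ((σ i : Fin n) : ℕ))) / n < t * t) :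
    (((Finset.univ.filter
        (fun i : Fin n => t ≤ dist (a (i : ℕ)) (b ((σ i : Fin n) : ℕ)))).card : ℝ) ≤ t * n) := by
  have hn' : (0 : ℝ) < n := by exact_mod_cast hn
  set bad := Finset.univ.filter
      (fun i : Fin n => t ≤ dist (a (i : ℕ)) (b ((σ i : Fin n) : ℕ))) with hbad
  have h1 : (bad.card : ℝ) * t ≤ ∑ i : Fin n, dist (a (i : ℕ)) (b ((σ i : Fin n) : ℕ)) := by
    calc (bad.card : ℝ) * t = ∑ _i ∈ bad, t := by rw [Finset.sum_const, nsmul_eq_mul]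
      _ ≤ ∑ i ∈ bad, dist (a (i : ℕ)) (b ((σ i : Fin n) : ℕ)) :=
          Finset.sum_le_sum (fun i hi => by
            simp only [hbad, Finset.mem_filter, Finset.mem_univ, true_and] at hi; exact hi)
      _ ≤ ∑ i : Fin n, dist (a (i : ℕ)) (b ((σ i : Fin n) : ℕ)) :=
          Finset.sum_le_sum_of_subset_of_nonneg (Finset.subset_univ _)
            (fun i _ _ => dist_nonneg)
  have h2 : (∑ i : Fin n, dist (a (i : ℕ)) (b ((σ i : Fin n) : ℕ))) < t * t * n := by
    rw [div_lt_iff₀ hn'] at hsum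
    exact hsum
  nlinarith [ht]

lemma avgDirac_periodic (T : X → X) (x : X) {p : ℕ} (hp : 0 < p) (hx : T^[p] x = x)
    {k : ℕ} (hk : 0 < k) :
    avgDirac (fun i => T^[i] x) (k * p) = avgDirac (fun i => T^[i] x) p := by
  have hfix : ∀ m : ℕ, T^[m * p] x = x := fun m => by
    rw [mul_comm, Function.iterate_mul]
    exact Function.iterate_fixed hx m
  have hsum : ∀ m : ℕ, ∑ i ∈ Finset.range (m * p), (Measure.dirac (T^[i] x) : Measure X)
      = m • ∑ i ∈ Finset.range p, Measure.dirac (T^[i] x) := by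
    intro m
    induction m with
    | zero => simp
    | succ m ih =>
      rw [Nat.succ_mul, Finset.sum_range_add, ih, succ_nsmul]
      congr 1
      apply Finset.sum_congr rfl
      intro i _
      congr 1
      rw [add_comm, Function.iterate_add_apply, hfix m]
  apply Subtype.ext
  show (avgDirac (fun i => T^[i] x) (k * p) : Measure X) = (avgDirac (fun i => T^[i] x) p : Measure X)
  rw [avgDirac_coe _ (Nat.mul_pos hk hp), avgDirac_coe _ hp, hsum k]
  rw [← Nat.cast_smul_eq_nsmul ℝ≥0∞ k, smul_smul]
  congr 1
  have hk0 : (k : ℝ≥0∞) ≠ 0 := by exact_mod_cast hk.ne'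
  have hp0 : (p : ℝ≥0∞) ≠ 0 := by exact_mod_cast hp.ne'
  rw [Nat.cast_mul, ENNReal.mul_inv (Or.inl hk0) (Or.inl (ENNReal.natCast_ne_top k))]
  rw [mul_comm ((k : ℝ≥0∞))⁻¹, mul_assoc, ENNReal.inv_mul_cancel hk0 (ENNReal.natCast_ne_top k),
    mul_one]

variable [TopologicalSpace.SeparableSpace X]

lemma mem_closure_iff_lp {S : Set (ProbabilityMeasure X)} {ν : ProbabilityMeasure X} :
    ν ∈ closure S ↔ ∀ δ > (0 : ℝ), ∃ μ ∈ S,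
      levyProkhorovDist (ν : Measure X) (μ : Measure X) < δ := by
  set φ := LevyProkhorov.probabilityMeasureHomeomorph (Ω := X) with hφ
  have h1 : ν ∈ closure S ↔ φ ν ∈ closure (φ '' S) := by
    rw [← Homeomorph.image_closure]
    exact ⟨fun h => Set.mem_image_of_mem _ h, fun ⟨w, hw, he⟩ => φ.injective he ▸ hw⟩
  rw [h1, Metric.mem_closure_iff]
  constructor
  · intro h δ hδ
    obtain ⟨b, hb, hdb⟩ := h δ hδ
    obtain ⟨μ, hμ, rfl⟩ := hb
    exact ⟨μ, hμ, hdb⟩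
  · intro h δ hδ
    obtain ⟨μ, hμ, hdμ⟩ := h δ hδ
    exact ⟨φ μ, Set.mem_image_of_mem _ hμ, hdμ⟩

lemma tendsto_lp {μs : ℕ → ProbabilityMeasure X} {ν : ProbabilityMeasure X}
    (h : Tendsto μs atTop (𝓝 ν)) :
    ∀ δ > (0 : ℝ), ∃ M : ℕ, ∀ n ≥ M,
      levyProkhorovDist (μs n : Measure X) (ν : Measure X) < δ := by
  set φ := LevyProkhorov.probabilityMeasureHomeomorph (Ω := X) with hφ
  have h2 : Tendsto (fun n => φ (μs n)) atTop (𝓝 (φ ν)) := (φ.continuous.tendsto ν).comp h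
  exact fun δ hδ => (Metric.tendsto_atTop.mp h2) δ hδ

end Aux


theorem stmt4 {X : Type*} [MetricSpace X] [TopologicalSpace.SeparableSpace X]
    [CompleteSpace X] [MeasurableSpace X] [BorelSpace X]
    (hd : ∃ C, ∀ a b : X, dist a b ≤ C)
    (T : X → X) (hT : Continuous T) (A B : Set X)
    (hA : ∀ x ∈ A, ∃ p, 0 < p ∧ T^[p] x = x)
    (hB : ∀ y ∈ B, ∃ μ : ProbabilityMeasure X, genericFor T y μ) :
    ({ν : ProbabilityMeasure X | ∃ y ∈ B, genericFor T y ν} ⊆ closure (perMeasures T A)) ↔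
      (∀ y ∈ B, ∀ ε > (0 : ℝ), ∀ N : ℕ, ∃ x ∈ A, ∃ n : ℕ, N ≤ n ∧ 0 < n ∧ T^[n] x = x ∧
        (⨅ σ : Equiv.Perm (Fin n),
          (∑ i : Fin n, dist (T^[(i : ℕ)] x) (T^[((σ i : Fin n) : ℕ)] y)) / n) < ε) := by
  
  obtain ⟨C₀, hC₀⟩ := hd
  set C : ℝ := max C₀ 0 with hCdef
  have hC0 : (0:ℝ) ≤ C := le_max_right _ _
  have hC : ∀ p q : X, dist p q ≤ C := fun p q => (hC₀ p q).trans (le_max_left _ _)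
  constructor
  · intro h y hy ε hε N
    obtain ⟨ν, hgen⟩ := hB y hy
    have hν : ν ∈ closure (perMeasures T A) := h ⟨y, hy, hgen⟩
    have h1C : (0:ℝ) < 1 + C := by linarith
    set δ : ℝ := ε / (2 * (1 + C)) with hδdef
    have hδ : 0 < δ := by positivity
    obtain ⟨μ, hμper, hμν⟩ := mem_closure_iff_lp.mp hν (δ/2) (by positivity)
    obtain ⟨x, hxA, p, hp, hxp, hμeq⟩ := hμper
    obtain ⟨M, hM⟩ := tendsto_lp hgen (δ/2) (by positivity)
    set k : ℕ := max (max N M) (⌈2 * C / ε⌉₊) + 1 with hk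
    have hkpos : 0 < k := Nat.succ_pos _
    set n : ℕ := k * p with hn
    have hnpos : 0 < n := Nat.mul_pos hkpos hp
    have hn' : (0:ℝ) < n := by exact_mod_cast hnpos
    have hkn : k ≤ n := Nat.le_mul_of_pos_right k hp
    have hNk : N ≤ k := le_trans ((le_max_left N M).trans (le_max_left _ _)) (Nat.le_succ _)
    have hMk : M ≤ k := le_trans ((le_max_right N M).trans (le_max_left _ _)) (Nat.le_succ _)
    have hNn : N ≤ n := hNk.trans hkn
    have hMn : M ≤ n := hMk.trans hkn
    have hfix : T^[n] x = x := by
      rw [hn, mul_comm, Function.iterate_mul]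
      exact Function.iterate_fixed hxp k
    have hempx : avgDirac (fun i => T^[i] x) n = μ := by
      rw [hμeq]
      exact avgDirac_periodic T x hp hxp hkpos
    have hd1 : levyProkhorovDist ((avgDirac (fun i => T^[i] x) n : Measure X))
        ((avgDirac (fun i => T^[i] y) n : Measure X)) < δ := by
      have htri := levyProkhorovDist_triangle ((avgDirac (fun i => T^[i] x) n : Measure X))
        (ν : Measure X) ((avgDirac (fun i => T^[i] y) n : Measure X))
      have e1 : levyProkhorovDist ((avgDirac (fun i => T^[i] x) n : Measure X))
          (ν : Measure X) < δ/2 := by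
        rw [hempx, levyProkhorovDist_comm]
        exact hμν
      have e2 : levyProkhorovDist (ν : Measure X)
          ((avgDirac (fun i => T^[i] y) n : Measure X)) < δ/2 := by
        rw [levyProkhorovDist_comm]
        exact hM n hMn
      linarith
    obtain ⟨σ, hσ⟩ := exists_matching_of_lp hnpos (fun i => T^[i] x) (fun i => T^[i] y)
      hδ hC0 hC hd1
    have h2 : δ * (1 + C) = ε / 2 := by
      rw [hδdef]
      field_simp
    have h3 : C / n < ε / 2 := by
      have h4 : ((⌈2*C/ε⌉₊ : ℕ) : ℝ) < (k:ℕ) := by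
        exact_mod_cast Nat.lt_succ_of_le (le_max_right _ _)
      have h5 : ((k:ℕ) : ℝ) ≤ n := by exact_mod_cast hkn
      have h6 := Nat.le_ceil (2*C/ε)
      have hnR : 2*C/ε < (n:ℝ) := by linarith
      have h7 : 2*C < (n:ℝ) * ε := (div_lt_iff₀ hε).mp hnR
      rw [div_lt_iff₀ hn']
      linarith
    have hbound : δ * (1 + C) + C / n < ε := by linarith
    refine ⟨x, hxA, n, hNn, hnpos, hfix, ?_⟩
    have hbdd : BddBelow (Set.range fun σ : Equiv.Perm (Fin n) =>
        (∑ i : Fin n, dist (T^[(i : ℕ)] x) (T^[((σ i : Fin n) : ℕ)] y)) / n) := by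
      refine ⟨0, ?_⟩
      rintro r ⟨σ', rfl⟩
      positivity
    exact lt_of_le_of_lt (ciInf_le hbdd σ) (lt_of_le_of_lt hσ hbound)
  · intro h ν hνmem
    obtain ⟨y, hy, hgen⟩ := hνmem
    rw [mem_closure_iff_lp]
    intro δ hδ
    obtain ⟨M, hM⟩ := tendsto_lp hgen (δ/4) (by positivity)
    set r : ℝ := δ/4 with hr
    have hrpos : 0 < r := by positivity
    obtain ⟨x, hxA, n, hn1, hnpos, hfix, hinf⟩ := h y hy (r*r) (by positivity) (max M 1)
    obtain ⟨σ, hσ⟩ := exists_lt_of_ciInf_lt hinf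
    have hcount := markov_count hnpos (fun i => T^[i] x) (fun i => T^[i] y) σ hrpos hσ
    have hlp1 := lp_le_of_matching hnpos (fun i => T^[i] x) (fun i => T^[i] y) σ hrpos.le hcount
    have hMn : M ≤ n := le_trans (le_max_left _ _) hn1
    have hlp2 := hM n hMn
    refine ⟨periodicOrbitMeasure T x n, ⟨x, hxA, n, hnpos, hfix, rfl⟩, ?_⟩
    have hper : periodicOrbitMeasure T x n = avgDirac (fun i => T^[i] x) n := by
      unfold periodicOrbitMeasure
      apply Subtype.ext
      show ((avgDirac (fun i => T^[i] x) n : ProbabilityMeasure X) : Measure X) = _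
      rfl
    rw [hper]
    have htri := levyProkhorovDist_triangle (ν : Measure X)
      ((avgDirac (fun i => T^[i] y) n : Measure X))
      ((avgDirac (fun i => T^[i] x) n : Measure X))
    have e1 : levyProkhorovDist (ν : Measure X)
        ((avgDirac (fun i => T^[i] y) n : Measure X)) < δ/4 := by
      rw [levyProkhorovDist_comm]
      exact hlp2
    have e2 : levyProkhorovDist ((avgDirac (fun i => T^[i] y) n : Measure X))
        ((avgDirac (fun i => T^[i] x) n : Measure X)) ≤ δ/4 := by
      rw [levyProkhorovDist_comm]
      exact hlp1
    linarith
end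

section
/- Let (X,T) be a Polish dynamical system and K ⊂ Per(T). If (X,T) is K-closable (every ergodic invariant measure has a generic point which is K-closable), then the set {μ_x : x ∈ K} of invariant measures supported on periodic orbits of points of K is dense in the set of ergodic T-invariant measures (in the weak* topology). -/
open MeasureTheory Filter Topology
open scoped ENNReal NNReal

open Metric in
lemma key_LP {X : Type*} [MetricSpace X] [MeasurableSpace X] [BorelSpace X]
    (a b : ℕ → X) (p q : ℕ) {ε : ℝ} (hε : 0 < ε) (hp : 0 < p) (hpq : p ≤ q)
    (hq : (q : ℝ) ≤ (1 + ε) * p)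
    (hab : ∀ i < p, dist (a i) (b i) < ε) :
    levyProkhorovDist (avgDirac a q).toMeasure (avgDirac b p).toMeasure ≤ ε := by
  have hq0 : 0 < q := hp.trans_le hpq
  apply levyProkhorovDist_le_of_forall_le _ _ hε.le
  intro ε' B hε' hB
  have hmaxq : max q 1 = q := Nat.max_eq_left hq0
  have hmaxp : max p 1 = p := Nat.max_eq_left hp
  have hA : (avgDirac a q).toMeasure B
      = (q : ℝ≥0∞)⁻¹ * ∑ i ∈ Finset.range q, B.indicator (1 : X → ℝ≥0∞) (a i) := by
    simp [avgDirac, hmaxq, Measure.finset_sum_apply, Measure.dirac_apply' _ hB]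
  have hBm : (avgDirac b p).toMeasure (thickening ε' B)
      = (p : ℝ≥0∞)⁻¹ * ∑ i ∈ Finset.range p,
          (thickening ε' B).indicator (1 : X → ℝ≥0∞) (b i) := by
    simp [avgDirac, hmaxp, Measure.finset_sum_apply,
      Measure.dirac_apply' _ isOpen_thickening.measurableSet]
  rw [hA, hBm]
  set S : ℝ≥0∞ := ∑ i ∈ Finset.range p, (thickening ε' B).indicator (1 : X → ℝ≥0∞) (b i)
  have h1 : ∀ i ∈ Finset.range p,
      B.indicator (1 : X → ℝ≥0∞) (a i) ≤ (thickening ε' B).indicator (1 : X → ℝ≥0∞) (b i) := by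
    intro i hi
    rw [Finset.mem_range] at hi
    by_cases h : a i ∈ B
    · have hbi : b i ∈ thickening ε' B :=
        Metric.mem_thickening_iff.mpr ⟨a i, h, by rw [dist_comm]; exact (hab i hi).trans hε'⟩
      simp [h, hbi]
    · simp [h]
  have hsplit : ∑ i ∈ Finset.range q, B.indicator (1 : X → ℝ≥0∞) (a i)
      ≤ S + ((q - p : ℕ) : ℝ≥0∞) := by
    rw [← Finset.sum_range_add_sum_Ico _ hpq]
    refine add_le_add (Finset.sum_le_sum h1) ?_
    calc ∑ i ∈ Finset.Ico p q, B.indicator (1 : X → ℝ≥0∞) (a i)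
        ≤ ∑ _i ∈ Finset.Ico p q, (1 : ℝ≥0∞) :=
          Finset.sum_le_sum fun i _ => by by_cases h : a i ∈ B <;> simp [h]
      _ = ((q - p : ℕ) : ℝ≥0∞) := by simp
  have hrem : (q : ℝ≥0∞)⁻¹ * ((q - p : ℕ) : ℝ≥0∞) ≤ ENNReal.ofReal ε' := by
    have hr : ((q - p : ℕ) : ℝ) ≤ ε * q := by
      rw [Nat.cast_sub hpq]
      have h1 : (p : ℝ) ≤ q := Nat.cast_le.mpr hpq
      nlinarith [hq]
    have hcast : ((q - p : ℕ) : ℝ≥0∞) ≤ ENNReal.ofReal ε * (q : ℝ≥0∞) := by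
      calc ((q - p : ℕ) : ℝ≥0∞) = ENNReal.ofReal ((q - p : ℕ) : ℝ) :=
            (ENNReal.ofReal_natCast _).symm
        _ ≤ ENNReal.ofReal (ε * q) := ENNReal.ofReal_le_ofReal hr
        _ = ENNReal.ofReal ε * ENNReal.ofReal (q : ℝ) := ENNReal.ofReal_mul hε.le
        _ = ENNReal.ofReal ε * (q : ℝ≥0∞) := by rw [ENNReal.ofReal_natCast]
    calc (q : ℝ≥0∞)⁻¹ * ((q - p : ℕ) : ℝ≥0∞)
        ≤ (q : ℝ≥0∞)⁻¹ * (ENNReal.ofReal ε * (q : ℝ≥0∞)) := mul_le_mul_right hcast _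
      _ = ENNReal.ofReal ε * ((q : ℝ≥0∞)⁻¹ * (q : ℝ≥0∞)) := by ring
      _ = ENNReal.ofReal ε := by
          rw [ENNReal.inv_mul_cancel (by exact_mod_cast hq0.ne') (by simp), mul_one]
      _ ≤ ENNReal.ofReal ε' := ENNReal.ofReal_le_ofReal hε'.le
  calc (q : ℝ≥0∞)⁻¹ * ∑ i ∈ Finset.range q, B.indicator (1 : X → ℝ≥0∞) (a i)
      ≤ (q : ℝ≥0∞)⁻¹ * (S + ((q - p : ℕ) : ℝ≥0∞)) := mul_le_mul_right hsplit _
    _ = (q : ℝ≥0∞)⁻¹ * S + (q : ℝ≥0∞)⁻¹ * ((q - p : ℕ) : ℝ≥0∞) := mul_add _ _ _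
    _ ≤ (p : ℝ≥0∞)⁻¹ * S + ENNReal.ofReal ε' := by
        refine add_le_add (mul_le_mul_left ?_ _) hrem
        exact ENNReal.inv_le_inv.mpr (by exact_mod_cast hpq)

theorem stmt6 {X : Type*} [MetricSpace X] [TopologicalSpace.SeparableSpace X]
    [CompleteSpace X] [MeasurableSpace X] [BorelSpace X]
    (hd : ∃ C, ∀ a b : X, dist a b ≤ C)
    (T : X → X) (hT : Continuous T) (K : Set X)
    (hK : ∀ y ∈ K, ∃ p, 0 < p ∧ T^[p] y = y)
    (hcl : ∀ μ : ProbabilityMeasure X, Ergodic T μ.toMeasure →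
      ∃ x : X, genericFor T x μ ∧ ClosableAt T K x) :
    {μ : ProbabilityMeasure X | Ergodic T μ.toMeasure} ⊆ closure (perMeasures T K) := by
  intro μ hμ
  obtain ⟨x, hgen, hclo⟩ := hcl μ hμ
  set H := LevyProkhorov.probabilityMeasureHomeomorph (Ω := X) with hH
  rw [H.isEmbedding.closure_eq_preimage_closure_image, Set.mem_preimage]
  rw [Metric.mem_closure_iff]
  intro δ hδ
  have hconv : Tendsto (fun n => H (avgDirac (fun i => T^[i] x) n)) atTop (𝓝 (H μ)) :=
    (H.continuous.tendsto μ).comp hgen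
  obtain ⟨N, hN⟩ := Metric.tendsto_atTop.mp hconv (δ / 3) (by positivity)
  obtain ⟨p, q, hp, hNp, hpq, hqle, y, hyK, hTy, hdist⟩ := hclo (δ / 3) (by positivity) N
  have hkey := key_LP (fun i => T^[i] y) (fun i => T^[i] x) p q (by positivity : (0:ℝ) < δ/3)
    hp hpq hqle hdist
  refine ⟨H (periodicOrbitMeasure T y q),
    ⟨periodicOrbitMeasure T y q, ⟨y, hyK, q, hp.trans_le hpq, hTy, rfl⟩, rfl⟩, ?_⟩
  have hd1 : dist (H μ) (H (periodicOrbitMeasure T y q))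
      ≤ dist (H μ) (H (avgDirac (fun i => T^[i] x) p))
        + dist (H (avgDirac (fun i => T^[i] x) p)) (H (periodicOrbitMeasure T y q)) :=
    dist_triangle _ _ _
  have hd2 : dist (H μ) (H (avgDirac (fun i => T^[i] x) p)) < δ / 3 := by
    rw [dist_comm]; exact hN p hNp
  have hd3 : dist (H (avgDirac (fun i => T^[i] x) p)) (H (periodicOrbitMeasure T y q))
      ≤ δ / 3 := by
    rw [dist_comm]
    exact hkey
  linarith
end
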